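/- arXiv:2005.01830 — 9 statements merged into one kernel-verified Lean document; each statement's English description precedes it below -/
import Mathlib

section
/- Let Γ be a simple graph and v₁, v₂ distinct vertices. If v₁ and v₂ are adjacent, then every vertex dominating v₁ is adjacent to every vertex dominating v₂. In particular, if additionally v₁ dominates v₂, then the set U(v₁) of vertices dominating v₁ spans a complete subgraph of Γ. -/
/-- `v` dominates `w` in the graph `G`: the link of `w` is contained in the star of `v`. -/
def SimpleGraph.Dominates {V : Type*} (G : SimpleGraph V) (v w : V) : Prop :=
  ∀ u : V, G.Adj u w → (G.Adj u v ∨ u = v)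

/-- If `v₁` and `v₂` are distinct adjacent vertices, then every vertex dominating `v₁`
is adjacent to every (distinct) vertex dominating `v₂`; in particular, if additionally
`v₁` dominates `v₂`, then the set `U(v₁)` of vertices dominating `v₁` is a clique. -/
theorem forced_adjacency {V : Type*} [Fintype V] (G : SimpleGraph V) (v₁ v₂ : V)
    (hne : v₁ ≠ v₂) (hadj : G.Adj v₁ v₂) :
    (∀ u w : V, G.Dominates u v₁ → G.Dominates w v₂ → u ≠ w → G.Adj u w) ∧
    (G.Dominates v₁ v₂ → G.IsClique {u : V | G.Dominates u v₁}) := by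
  constructor
  · intro u w hu hw huw
    rcases hu v₂ hadj.symm with h1 | h1
    · rcases hw u h1.symm with h2 | h2
      · exact h2
      · exact absurd h2 huw
    · rcases hw v₁ hadj with h2 | h2
      · rcases hu w h2.symm with h3 | h3
        · exact h3.symm
        · exact absurd h3.symm huw
      · subst h1; subst h2; exact hadj.symm
  · intro hdom u hu w hw huw
    simp only [Set.mem_setOf_eq] at hu hw
    rcases hu v₂ hadj.symm with h1 | h1
    · rcases hdom u h1.symm with h3 | h3
      · rcases hw u h3 with h4 | h4
        · exact h4
        · exact absurd h4 huw
      · subst h3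
        rcases hw v₂ hadj.symm with h2 | h2
        · rcases hdom w h2.symm with h4 | h4
          · exact h4.symm
          · exact absurd h4.symm huw
        · subst h2; exact hadj
    · subst h1
      rcases hw v₂ hadj.symm with h2 | h2
      · exact h2
      · exact absurd h2 huw
end

section
/- Let F be a free group on a finite set W, let R be a finite index normal subgroup of F with quotient map q : F → G. Define Aut(F; R) as the set of automorphisms φ of F with q ∘ φ = q. Then Aut(F; R) is a subgroup of Aut(F) of finite index. -/
/-- Let `F` be a free group on a finite set `W`, `R ⊴ F` a normal subgroup of finite
index, and `q : F → F/R` the quotient map.  Then `Aut(F; R) = {φ ∈ Aut(F) : q ∘ φ = q}`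
is a subgroup of `Aut(F)` of finite index. -/
theorem autFR_finiteIndex (W : Type*) [Fintype W] (R : Subgroup (FreeGroup W))
    [R.Normal] [R.FiniteIndex] :
    ∃ A : Subgroup (MulAut (FreeGroup W)),
      ((A : Set (MulAut (FreeGroup W))) =
        {φ : MulAut (FreeGroup W) |
          ∀ x : FreeGroup W, QuotientGroup.mk' R (φ x) = QuotientGroup.mk' R x}) ∧
      A.FiniteIndex := by
  classical
  set A : Subgroup (MulAut (FreeGroup W)) :=
    { carrier := {φ : MulAut (FreeGroup W) |
        ∀ x : FreeGroup W, QuotientGroup.mk' R (φ x) = QuotientGroup.mk' R x}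
      one_mem' := by intro x; rfl
      mul_mem' := by
        intro φ ψ hφ hψ x
        simpa [hψ x] using hφ (ψ x)
      inv_mem' := by
        intro φ hφ x
        have := hφ (φ⁻¹ x)
        simpa using this.symm } with hA
  refine ⟨A, rfl, ?_⟩
  -- the quotient by A injects into W → FreeGroup W ⧸ R, which is finite
  have hG : Finite (FreeGroup W ⧸ R) := by
    have : Nat.card (FreeGroup W ⧸ R) ≠ 0 := Subgroup.FiniteIndex.index_ne_zero
    exact Nat.finite_of_card_ne_zero this
  -- key: two auts are in the same left coset iff the induced maps agree
  have key : ∀ φ ψ : MulAut (FreeGroup W),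
      (∀ y : FreeGroup W, QuotientGroup.mk' R (φ⁻¹ y) = QuotientGroup.mk' R (ψ⁻¹ y)) →
      φ⁻¹ * ψ ∈ A := by
    intro φ ψ h x
    have := h (ψ x)
    simpa using this
  let f : (MulAut (FreeGroup W) ⧸ A) → (W → FreeGroup W ⧸ R) :=
    Quotient.lift (fun φ : MulAut (FreeGroup W) =>
        fun w => QuotientGroup.mk' R (φ⁻¹ (FreeGroup.of w)))
      (by
        intro φ ψ hrel
        have h : φ⁻¹ * ψ ∈ A := (QuotientGroup.leftRel_apply).mp hrel
        funext w
        have := h (ψ⁻¹ (FreeGroup.of w))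
        simpa using this)
  have hf : Function.Injective f := by
    intro a b
    induction a using Quotient.inductionOn with
    | h φ =>
    induction b using Quotient.inductionOn with
    | h ψ =>
    intro hab
    have hgen : ∀ w : W,
        QuotientGroup.mk' R (φ⁻¹ (FreeGroup.of w)) =
          QuotientGroup.mk' R (ψ⁻¹ (FreeGroup.of w)) := fun w => congrFun hab w
    have hall : ∀ y : FreeGroup W,
        QuotientGroup.mk' R (φ⁻¹ y) = QuotientGroup.mk' R (ψ⁻¹ y) := by
      have := FreeGroup.ext_hom
        ((QuotientGroup.mk' R).comp (φ⁻¹ : MulAut (FreeGroup W)).toMonoidHom)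
        ((QuotientGroup.mk' R).comp (ψ⁻¹ : MulAut (FreeGroup W)).toMonoidHom)
        (fun w => hgen w)
      intro y
      exact DFunLike.congr_fun this y
    exact Quotient.sound ((QuotientGroup.leftRel_apply).mpr (key φ ψ hall))
  have : Finite (MulAut (FreeGroup W) ⧸ A) := Finite.of_injective f hf
  exact ⟨Subgroup.index_ne_zero_of_finite⟩
end

section
/- Let G be a finite group, q : F → G a surjective homomorphism from the free group F on a finite set W, and D : F → Z[G]^W the crossed homomorphism with D(w) = e_w for w ∈ W (where F acts via q). Then an element Σ_w α_w e_w of Q[G]^W lies in the image of the kernel R = ker q (after tensoring with Q, i.e. is a 1-cycle) if and only if Σ_w α_w (q(w) − 1) = 0 in Q[G]. -/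
/-- Let `q : F → G` be a surjection from the free group on a finite set `W` onto a finite
group `G`, with kernel `R`, and let `D : F → ℚ[G]^W` be the crossed homomorphism with
`D(w) = e_w` (where `F` acts through `q`).  An element `Σ_w α_w e_w` of `ℚ[G]^W` is a
1-cycle (i.e. lies in the rational span of the image of `R`) if and only if
`Σ_w α_w (q(w) − 1) = 0` in `ℚ[G]`. -/
theorem cycles_iff_boundary_zero (W : Type*) [Fintype W] [DecidableEq W]
    (G : Type*) [Group G] [Fintype G] (q : FreeGroup W →* G)
    (hq : Function.Surjective q)
    (D : FreeGroup W → (W → MonoidAlgebra ℚ G))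
    (hD1 : ∀ w : W, D (FreeGroup.of w) = Pi.single w 1)
    (hD2 : ∀ x y : FreeGroup W,
      D (x * y) = D x + fun w => MonoidAlgebra.of ℚ G (q x) * D y w)
    (α : W → MonoidAlgebra ℚ G) :
    α ∈ Submodule.span ℚ (D '' {x : FreeGroup W | x ∈ q.ker}) ↔
      ∑ w : W, α w * (MonoidAlgebra.of ℚ G (q (FreeGroup.of w)) - 1) = 0 := by
  classical
  set M : Submodule ℚ (W → MonoidAlgebra ℚ G) :=
    Submodule.span ℚ (D '' {x : FreeGroup W | x ∈ q.ker}) with hMdef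
  -- basic facts about D
  have hD0 : D 1 = 0 := by
    have h := hD2 1 1
    rw [mul_one] at h
    have h'' : (fun w => MonoidAlgebra.of ℚ G (q 1) * D 1 w) = D 1 := by
      funext w
      rw [map_one, map_one, one_mul]
    rw [h''] at h
    exact left_eq_add.mp h
  have hDinv : ∀ (x : FreeGroup W) (w : W),
      MonoidAlgebra.of ℚ G (q x) * D x⁻¹ w = - D x w := by
    intro x w
    have h := hD2 x x⁻¹
    rw [mul_inv_cancel, hD0] at h
    have h2 := congrFun h.symm w
    simp only [Pi.add_apply, Pi.zero_apply] at h2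
    exact (add_eq_zero_iff_neg_eq.mp h2).symm
  -- difference of D values with same image lies in M
  have hmem : ∀ x y : FreeGroup W, q x = q y → D x - D y ∈ M := by
    intro x y hxy
    have hdiff : D (x * y⁻¹) = D x - D y := by
      rw [hD2 x y⁻¹]
      funext w
      simp only [Pi.add_apply, Pi.sub_apply]
      rw [hxy, hDinv y w, sub_eq_add_neg]
    have hk : x * y⁻¹ ∈ q.ker := by
      rw [MonoidHom.mem_ker, map_mul, map_inv, hxy, mul_inv_cancel]
    rw [← hdiff]
    exact Submodule.subset_span ⟨x * y⁻¹, hk, rfl⟩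
  -- the boundary map as a linear map
  set c : W → MonoidAlgebra ℚ G :=
    fun w => MonoidAlgebra.of ℚ G (q (FreeGroup.of w)) - 1 with hc
  set dmap : (W → MonoidAlgebra ℚ G) →ₗ[ℚ] MonoidAlgebra ℚ G :=
    ∑ w : W, (LinearMap.mulRight ℚ (c w)).comp (LinearMap.proj w) with hdm
  have hdmap : ∀ β : W → MonoidAlgebra ℚ G, dmap β = ∑ w : W, β w * c w := by
    intro β
    simp [hdm, LinearMap.sum_apply, LinearMap.mulRight_apply]
  have hsingle : ∀ (w : W) (a : MonoidAlgebra ℚ G),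
      dmap (Pi.single w a) = a * c w := by
    intro w a
    rw [hdmap]
    rw [Finset.sum_eq_single w]
    · simp
    · intro b _ hb
      simp [Pi.single_eq_of_ne hb]
    · simp
  -- Lemma A: dmap (D x) = of (q x) - 1
  have hA : ∀ x : FreeGroup W, dmap (D x) = MonoidAlgebra.of ℚ G (q x) - 1 := by
    intro x
    induction x using FreeGroup.induction_on with
    | C1 => simp [hD0, MonoidAlgebra.one_def]
    | of w =>
        show dmap (D (FreeGroup.of w)) = MonoidAlgebra.of ℚ G (q (FreeGroup.of w)) - 1
        rw [hD1 w, hsingle]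
        simp [hc]
    | inv_of w ih =>
        show dmap (D (FreeGroup.of w)⁻¹) = MonoidAlgebra.of ℚ G (q (FreeGroup.of w)⁻¹) - 1
        replace ih : dmap (D (FreeGroup.of w)) =
          MonoidAlgebra.of ℚ G (q (FreeGroup.of w)) - 1 := ih
        have key : MonoidAlgebra.of ℚ G (q (FreeGroup.of w)) * dmap (D (FreeGroup.of w)⁻¹)
            = - dmap (D (FreeGroup.of w)) := by
          rw [hdmap, hdmap, Finset.mul_sum, ← Finset.sum_neg_distrib]
          refine Finset.sum_congr rfl fun w' _ => ?_
          rw [← mul_assoc, hDinv, neg_mul]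
        rw [ih] at key
        have hg : MonoidAlgebra.of ℚ G (q (FreeGroup.of w)⁻¹) *
            MonoidAlgebra.of ℚ G (q (FreeGroup.of w)) = 1 := by
          rw [← map_mul, map_inv, inv_mul_cancel, map_one]
        calc dmap (D (FreeGroup.of w)⁻¹)
            = MonoidAlgebra.of ℚ G (q (FreeGroup.of w)⁻¹) *
              (MonoidAlgebra.of ℚ G (q (FreeGroup.of w)) * dmap (D (FreeGroup.of w)⁻¹)) := by
              rw [← mul_assoc, hg, one_mul]
          _ = MonoidAlgebra.of ℚ G (q (FreeGroup.of w)⁻¹) *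
              (1 - MonoidAlgebra.of ℚ G (q (FreeGroup.of w))) := by rw [key, neg_sub]
          _ = MonoidAlgebra.of ℚ G (q (FreeGroup.of w)⁻¹) - 1 := by
              rw [mul_sub, mul_one, hg]
    | mul x y ihx ihy =>
        rw [hD2 x y]
        have hadd : dmap (D x + fun w => MonoidAlgebra.of ℚ G (q x) * D y w)
            = dmap (D x) + MonoidAlgebra.of ℚ G (q x) * dmap (D y) := by
          rw [map_add, hdmap (fun w => MonoidAlgebra.of ℚ G (q x) * D y w),
            hdmap (D y), Finset.mul_sum]
          simp [mul_assoc]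
        rw [hadd, ihx, ihy, map_mul, mul_sub, mul_one, ← map_mul]
        abel
  -- forward direction: M ≤ ker dmap
  have hMle : M ≤ LinearMap.ker dmap := by
    rw [hMdef, Submodule.span_le]
    rintro _ ⟨x, hx, rfl⟩
    have hx1 : q x = 1 := hx
    simp [LinearMap.mem_ker, hA, hx1, MonoidAlgebra.one_def]
  -- the section
  set s : G → FreeGroup W := Function.surjInv hq with hs
  have hqs : ∀ g : G, q (s g) = g := fun g => Function.surjInv_eq hq g
  -- the linear map L
  set v : G → (W → MonoidAlgebra ℚ G) ⧸ M := fun g => Submodule.Quotient.mk (D (s g)) with hv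
  set L : MonoidAlgebra ℚ G →ₗ[ℚ] (W → MonoidAlgebra ℚ G) ⧸ M :=
    Finsupp.linearCombination ℚ v ∘ₗ (MonoidAlgebra.coeffLinearEquiv ℚ).toLinearMap with hL
  have hLof : ∀ g : G, L (MonoidAlgebra.of ℚ G g) = v g := by
    intro g
    show Finsupp.linearCombination ℚ v (Finsupp.single g 1) = v g
    simp
  have hmk : ∀ x : FreeGroup W,
      Submodule.Quotient.mk (D x) = L (MonoidAlgebra.of ℚ G (q x)) := by
    intro x
    refine Eq.trans ?_ (hLof (q x)).symm
    exact (Submodule.Quotient.eq M).mpr (hmem x (s (q x)) (by rw [hqs]))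
  -- main identity: mkQ = L ∘ dmap
  have hmain : M.mkQ = L ∘ₗ dmap := by
    apply Module.Basis.ext (Pi.basis fun _ : W => MonoidAlgebra.basis G ℚ)
    rintro ⟨w, g⟩
    rw [Pi.basis_apply]
    have hbas : MonoidAlgebra.basis G ℚ g = MonoidAlgebra.of ℚ G g := by
      simp [MonoidAlgebra.basis_apply, MonoidAlgebra.of_apply]
    rw [hbas]
    have hsg : Pi.single w (MonoidAlgebra.of ℚ G g) = D (s g * FreeGroup.of w) - D (s g) := by
      rw [hD2, hD1]
      funext w'
      simp only [Pi.add_apply, Pi.sub_apply, add_sub_cancel_left]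
      rcases eq_or_ne w' w with rfl | hne
      · simp [hqs]
      · simp [Pi.single_eq_of_ne hne]
    rw [LinearMap.comp_apply, Submodule.mkQ_apply, hsg]
    calc (Submodule.Quotient.mk (D (s g * FreeGroup.of w) - D (s g)) :
          (W → MonoidAlgebra ℚ G) ⧸ M)
        = Submodule.Quotient.mk (D (s g * FreeGroup.of w)) -
            Submodule.Quotient.mk (D (s g)) := by rw [Submodule.Quotient.mk_sub]
      _ = L (MonoidAlgebra.of ℚ G (g * q (FreeGroup.of w))) - L (MonoidAlgebra.of ℚ G g) := by
          rw [hmk, hmk, map_mul, hqs]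
      _ = L (dmap (D (s g * FreeGroup.of w) - D (s g))) := by
          rw [← hsg, hsingle, ← map_sub L]
          congr 1
          simp only [hc]
          rw [mul_sub, mul_one, ← map_mul]
  constructor
  · intro hα
    have h := hMle hα
    rw [LinearMap.mem_ker, hdmap] at h
    exact h
  · intro hα
    have h0 : dmap α = 0 := by rw [hdmap]; exact hα
    have h := congrFun (congrArg DFunLike.coe hmain) α
    rw [Submodule.mkQ_apply, LinearMap.comp_apply, h0, map_zero] at h
    exact (Submodule.Quotient.mk_eq_zero M).mp h
end

section
/- Let k be a positive integer and m ≥ 6k+3 with m even. Then there exist m-cycles g₁, …, g_k in the symmetric group Sym(m) such that for every pair i ≠ j, the subgroup generated by g_i and g_j is all of Sym(m). -/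
namespace PGCS

open Equiv Equiv.Perm Subgroup Finset

variable {α : Type*} [DecidableEq α]

/-- The 3-cycle `a → b → c → a` as a product of two swaps. -/
def t3 (a b c : α) : Equiv.Perm α := Equiv.swap a b * Equiv.swap b c

lemma t3_apply {a b c : α} (hab : a ≠ b) (hac : a ≠ c) (hbc : b ≠ c) (x : α) :
    t3 a b c x = if x = a then b else if x = b then c else if x = c then a else x := by
  simp only [t3, Equiv.Perm.mul_apply]
  rcases eq_or_ne x a with rfl | hxa
  · rw [if_pos rfl, Equiv.swap_apply_of_ne_of_ne hab hac, Equiv.swap_apply_left]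
  rcases eq_or_ne x b with rfl | hxb
  · rw [if_neg hxa, if_pos rfl, Equiv.swap_apply_left,
      Equiv.swap_apply_of_ne_of_ne (Ne.symm hac) (Ne.symm hbc)]
  rcases eq_or_ne x c with rfl | hxc
  · rw [if_neg hxa, if_neg hxb, if_pos rfl, Equiv.swap_apply_right, Equiv.swap_apply_right]
  · rw [if_neg hxa, if_neg hxb, if_neg hxc, Equiv.swap_apply_of_ne_of_ne hxb hxc,
      Equiv.swap_apply_of_ne_of_ne hxa hxb]

lemma t3_fix {a b c x : α} (hab : a ≠ b) (hac : a ≠ c) (hbc : b ≠ c)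
    (hxa : x ≠ a) (hxb : x ≠ b) (hxc : x ≠ c) : t3 a b c x = x := by
  rw [t3_apply hab hac hbc, if_neg hxa, if_neg hxb, if_neg hxc]

lemma t3_fst {a b c : α} (hab : a ≠ b) (hac : a ≠ c) (hbc : b ≠ c) : t3 a b c a = b := by
  rw [t3_apply hab hac hbc, if_pos rfl]

lemma t3_snd {a b c : α} (hab : a ≠ b) (hac : a ≠ c) (hbc : b ≠ c) : t3 a b c b = c := by
  rw [t3_apply hab hac hbc, if_neg (Ne.symm hab), if_pos rfl]

lemma t3_thd {a b c : α} (hab : a ≠ b) (hac : a ≠ c) (hbc : b ≠ c) : t3 a b c c = a := by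
  rw [t3_apply hab hac hbc, if_neg (Ne.symm hac), if_neg (Ne.symm hbc), if_pos rfl]

lemma t3_conj (f : Equiv.Perm α) (a b c : α) :
    f * t3 a b c * f⁻¹ = t3 (f a) (f b) (f c) := by
  simp only [t3]
  rw [Equiv.swap_apply_apply, Equiv.swap_apply_apply]
  group

lemma t3_inv {a b c : α} (hab : a ≠ b) (hac : a ≠ c) (hbc : b ≠ c) :
    (t3 a b c)⁻¹ = t3 a c b := by
  apply inv_eq_of_mul_eq_one_right
  ext y
  simp only [Equiv.Perm.mul_apply, Equiv.Perm.one_apply]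
  rw [t3_apply hac hab (Ne.symm hbc), t3_apply hab hac hbc]
  split_ifs <;> simp_all

lemma t3_P1 {a b c d : α} (hab : a ≠ b) (hac : a ≠ c) (had : a ≠ d)
    (hbc : b ≠ c) (hbd : b ≠ d) (hcd : c ≠ d) :
    t3 a b d * t3 a c b = t3 a c d := by
  ext y
  simp only [Equiv.Perm.mul_apply]
  rw [t3_apply hac hab (Ne.symm hbc), t3_apply hab had hbd, t3_apply hac had hcd]
  split_ifs <;> simp_all

lemma t3_P2 {a c d e : α} (hac : a ≠ c) (had : a ≠ d) (hae : a ≠ e)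
    (hcd : c ≠ d) (hce : c ≠ e) (hde : d ≠ e) :
    t3 a d e * t3 c e d = t3 a d c := by
  ext y
  simp only [Equiv.Perm.mul_apply]
  rw [t3_apply hce hcd (Ne.symm hde), t3_apply had hae hde, t3_apply had hac (Ne.symm hcd)]
  split_ifs <;> simp_all

lemma t3_commute {a b c d e f : α} (hab : a ≠ b) (hac : a ≠ c) (hbc : b ≠ c)
    (hde : d ≠ e) (hdf : d ≠ f) (hef : e ≠ f)
    (had : a ≠ d) (hae : a ≠ e) (haf : a ≠ f)
    (hbd : b ≠ d) (hbe : b ≠ e) (hbf : b ≠ f)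
    (hcd : c ≠ d) (hce : c ≠ e) (hcf : c ≠ f) :
    Commute (t3 a b c) (t3 d e f) := by
  apply Equiv.Perm.Disjoint.commute
  intro y
  by_cases hya : y = a
  · subst hya; exact Or.inr (t3_fix hde hdf hef had hae haf)
  by_cases hyb : y = b
  · subst hyb; exact Or.inr (t3_fix hde hdf hef hbd hbe hbf)
  by_cases hyc : y = c
  · subst hyc; exact Or.inr (t3_fix hde hdf hef hcd hce hcf)
  · exact Or.inl (t3_fix hab hac hbc hya hyb hyc)

lemma swap_t3_commute {a b d e f : α} (hde : d ≠ e) (hdf : d ≠ f) (hef : e ≠ f)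
    (had : a ≠ d) (hae : a ≠ e) (haf : a ≠ f)
    (hbd : b ≠ d) (hbe : b ≠ e) (hbf : b ≠ f) :
    Commute (Equiv.swap a b) (t3 d e f) := by
  apply Equiv.Perm.Disjoint.commute
  intro y
  by_cases hya : y = a
  · subst hya; exact Or.inr (t3_fix hde hdf hef had hae haf)
  by_cases hyb : y = b
  · subst hyb; exact Or.inr (t3_fix hde hdf hef hbd hbe hbf)
  · exact Or.inl (Equiv.swap_apply_of_ne_of_ne hya hyb)

lemma swap_cycle_conj {σ : Equiv.Perm α} {y : α}
    (h1 : σ y ≠ y) (h2 : σ (σ y) ≠ y) (h3 : σ (σ y) ≠ σ y) :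
    Equiv.swap y (σ y) * σ * Equiv.swap y (σ y) * σ⁻¹ = t3 y (σ y) (σ (σ y)) := by
  ext w
  simp only [Equiv.Perm.mul_apply]
  rw [t3_apply (Ne.symm h1) (Ne.symm h2) (Ne.symm h3)]
  rcases eq_or_ne w y with rfl | hwy
  · have A : σ⁻¹ w ≠ w := by
      rw [Ne, Equiv.Perm.inv_eq_iff_eq]; exact fun h => h1 h.symm
    have B : σ⁻¹ w ≠ σ w := by
      rw [Ne, Equiv.Perm.inv_eq_iff_eq]; exact fun h => h2 h.symm
    rw [Equiv.swap_apply_of_ne_of_ne A B, (show σ (σ⁻¹ w) = w from Equiv.apply_symm_apply σ w), Equiv.swap_apply_left,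
      if_pos rfl]
  rcases eq_or_ne w (σ y) with rfl | hwsy
  · rw [(show σ⁻¹ (σ y) = y from Equiv.symm_apply_apply σ y), Equiv.swap_apply_left,
      Equiv.swap_apply_of_ne_of_ne h2 h3, if_neg h1, if_pos rfl]
  rcases eq_or_ne w (σ (σ y)) with rfl | hwssy
  · rw [if_neg h2, if_neg h3, if_pos rfl]
    have e : σ⁻¹ (σ (σ y)) = σ y := Equiv.symm_apply_apply σ (σ y)
    rw [e, Equiv.swap_apply_right, Equiv.swap_apply_right]
  · have C : σ⁻¹ w ≠ y := by
      rw [Ne, Equiv.Perm.inv_eq_iff_eq]; exact hwsy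
    have D : σ⁻¹ w ≠ σ y := by
      rw [Ne, Equiv.Perm.inv_eq_iff_eq]; exact hwssy
    rw [Equiv.swap_apply_of_ne_of_ne C D, (show σ (σ⁻¹ w) = w from Equiv.apply_symm_apply σ w),
      Equiv.swap_apply_of_ne_of_ne hwy hwsy, if_neg hwy, if_neg hwsy, if_neg hwssy]

section GroupHelpers
variable {G : Type*} [Group G]

lemma conj_mul (f X Y : G) : f * (X * Y) * f⁻¹ = (f * X * f⁻¹) * (f * Y * f⁻¹) := by group

lemma conj_conj (f g X : G) : (f * g) * X * (f * g)⁻¹ = f * (g * X * g⁻¹) * f⁻¹ := by group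

lemma conj_eq_of_commute {f X : G} (h : Commute f X) : f * X * f⁻¹ = X := by
  rw [h.eq, mul_inv_cancel_right]

end GroupHelpers

lemma cycle_pow_apply_inj [Fintype α] {σ : Equiv.Perm α}
    (hc : σ.IsCycle) (hs : σ.support = Finset.univ) (x : α) :
    ∀ {s t : ℕ}, s < Fintype.card α → t < Fintype.card α → (σ^s) x = (σ^t) x → s = t := by
  have hσx : σ x ≠ x := Equiv.Perm.mem_support.mp (by rw [hs]; exact Finset.mem_univ x)
  have ho : orderOf σ = Fintype.card α := by
    rw [hc.orderOf, hs, Finset.card_univ]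
  have key : ∀ {s t : ℕ}, s ≤ t → t < Fintype.card α → (σ^s) x = (σ^t) x → s = t := by
    intro s t hst htm h
    have hts : σ ^ t = σ ^ s * σ ^ (t - s) := by rw [← pow_add]; congr 1; omega
    have h2 : (σ ^ (t - s)) x = x := by
      apply (σ ^ s).injective
      rw [← Equiv.Perm.mul_apply, ← hts, ← h]
    have h3 : σ ^ (t - s) = 1 := (hc.pow_eq_one_iff' hσx).mpr h2
    have h4 := orderOf_dvd_of_pow_eq_one h3
    rw [ho] at h4
    have h5 : t - s = 0 ∨ Fintype.card α ≤ t - s := by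
      rcases Nat.eq_zero_or_pos (t - s) with h' | h'
      · exact Or.inl h'
      · exact Or.inr (Nat.le_of_dvd h' h4)
    omega
  intro s t hsm htm h
  rcases le_total s t with hst | hst
  · exact key hst htm h
  · exact (key hst hsm h.symm).symm

/-- Key engine: if a subgroup of the permutation group of a finite set of even
cardinality contains a full cycle `σ` and the product of the two "consecutive"
3-cycles at positions `a+D` and `a` along `σ`, then it is the full group. -/
lemma pair_gen [Fintype α] {σ : Equiv.Perm α}
    (hc : σ.IsCycle) (hs : σ.support = Finset.univ) (he : Even (Fintype.card α))
    (x : α) (a D : ℕ) (hD : 3 ≤ D) (hbound : a + 2*D + 5 ≤ Fintype.card α)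
    (H : Subgroup (Equiv.Perm α)) (hσH : σ ∈ H)
    (hW : t3 ((σ^(a+D)) x) ((σ^(a+D+1)) x) ((σ^(a+D+2)) x) *
          t3 ((σ^a) x) ((σ^(a+1)) x) ((σ^(a+2)) x) ∈ H) :
    H = ⊤ := by
  classical
  set m := Fintype.card α with hmdef
  have hm : 11 ≤ m := by omega
  set p : ℕ → α := fun t => (σ^t) x with hp
  have hshift : ∀ s t : ℕ, (σ^s) (p t) = p (s + t) := by
    intro s t; simp only [hp]; rw [← Equiv.Perm.mul_apply, ← pow_add]
  have hstep : ∀ t : ℕ, σ (p t) = p (t + 1) := by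
    intro t
    have h := hshift 1 t
    rw [pow_one] at h
    rw [h]; congr 1; omega
  have hinj : ∀ {s t : ℕ}, s < m → t < m → p s = p t → s = t := by
    intro s t hsm htm hpq
    exact cycle_pow_apply_inj hc hs x hsm htm hpq
  have dne : ∀ {s t : ℕ}, s < m → t < m → s ≠ t → p s ≠ p t := by
    intro s t hsm htm hne heq
    exact hne (hinj hsm htm heq)
  have ho : orderOf σ = m := by rw [hc.orderOf, hs, Finset.card_univ]
  have hσm : σ ^ m = 1 := by rw [← ho]; exact pow_orderOf_eq_one σ
  have hper : ∀ t : ℕ, p (m + t) = p t := by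
    intro t; simp only [hp]; rw [pow_add, hσm, one_mul]
  have hmod : ∀ t : ℕ, p (t % m) = p t := by
    intro t; simp only [hp]; rw [← ho, pow_mod_orderOf]
  set zz : ℕ → Equiv.Perm α := fun t => t3 (p t) (p (t+1)) (p (t+2)) with hzz
  have zz_eq : ∀ t u v : ℕ, t + 1 = u → t + 2 = v → zz t = t3 (p t) (p u) (p v) := by
    intro t u v h1 h2; simp only [hzz]; rw [h1, h2]
  have zzconj : ∀ s t : ℕ, σ^s * zz t * (σ^s)⁻¹ = zz (s + t) := by
    intro s t
    simp only [hzz]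
    rw [t3_conj, hshift, hshift, hshift,
      show s + (t+1) = s + t + 1 from by omega, show s + (t+2) = s + t + 2 from by omega]
  have tri : ∀ s : ℕ, s + 2 < m → (p s ≠ p (s+1) ∧ p s ≠ p (s+2) ∧ p (s+1) ≠ p (s+2)) := by
    intro s hsm
    exact ⟨dne (by omega) (by omega) (by omega), dne (by omega) (by omega) (by omega),
      dne (by omega) (by omega) (by omega)⟩
  have hcomm : ∀ s t : ℕ, s + 3 ≤ t → t + 2 < m → Commute (zz s) (zz t) := by
    intro s t hst htm
    obtain ⟨h1, h2, h3⟩ := tri s (by omega)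
    obtain ⟨h4, h5, h6⟩ := tri t (by omega)
    exact t3_commute h1 h2 h3 h4 h5 h6
      (dne (by omega) (by omega) (by omega)) (dne (by omega) (by omega) (by omega))
      (dne (by omega) (by omega) (by omega)) (dne (by omega) (by omega) (by omega))
      (dne (by omega) (by omega) (by omega)) (dne (by omega) (by omega) (by omega))
      (dne (by omega) (by omega) (by omega)) (dne (by omega) (by omega) (by omega))
      (dne (by omega) (by omega) (by omega))
  set b := a + D with hb
  have hWmem : zz b * zz a ∈ H := hW
  have hK2 : σ^(D+2) * (zz b * zz a) * (σ^(D+2))⁻¹ = zz (a+2*D+2) * zz (a+D+2) := by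
    rw [conj_mul, zzconj, zzconj, show D+2+b = a+2*D+2 from by omega,
      show D+2+a = a+D+2 from by omega]
  have hK2mem : zz (a+2*D+2) * zz (a+D+2) ∈ H := by
    rw [← hK2]
    exact H.mul_mem (H.mul_mem (H.pow_mem hσH _) hWmem) (H.inv_mem (H.pow_mem hσH _))
  set Z1 := zz a with hZ1
  set Z2 := zz b with hZ2
  set Z3 := zz (a+D+2) with hZ3
  set Z4 := zz (a+2*D+2) with hZ4
  have c13 : Commute Z1 Z3 := hcomm a (a+D+2) (by omega) (by omega)
  have c14 : Commute Z1 Z4 := hcomm a (a+2*D+2) (by omega) (by omega)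
  have c24 : Commute Z2 Z4 := hcomm b (a+2*D+2) (by omega) (by omega)
  have trib := tri b (by omega)
  have hZ2form : Z2 = t3 (p b) (p (b+1)) (p (b+2)) := by
    rw [hZ2]
  have e1 : Z2 (p (a+D+2)) = p (a+D) := by
    rw [show a+D+2 = b+2 from by omega, show a+D = b from rfl, hZ2form]
    exact t3_thd trib.1 trib.2.1 trib.2.2
  have e2 : Z2 (p (a+D+3)) = p (a+D+3) := by
    rw [hZ2form]
    exact t3_fix trib.1 trib.2.1 trib.2.2
      (dne (by omega) (by omega) (by omega)) (dne (by omega) (by omega) (by omega))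
      (dne (by omega) (by omega) (by omega))
  have e3 : Z2 (p (a+D+4)) = p (a+D+4) := by
    rw [hZ2form]
    exact t3_fix trib.1 trib.2.1 trib.2.2
      (dne (by omega) (by omega) (by omega)) (dne (by omega) (by omega) (by omega))
      (dne (by omega) (by omega) (by omega))
  have hZ3form : Z3 = t3 (p (a+D+2)) (p (a+D+3)) (p (a+D+4)) := by
    rw [hZ3]
  set W := Z2 * Z1 with hWdef
  set K2 := Z4 * Z3 with hK2def
  have step1 : W * K2 * W⁻¹ = Z4 * t3 (p (a+D)) (p (a+D+3)) (p (a+D+4)) := by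
    rw [hK2def, conj_mul]
    have eZ4 : W * Z4 * W⁻¹ = Z4 := conj_eq_of_commute (c24.mul_left c14)
    have eZ3 : W * Z3 * W⁻¹ = t3 (p (a+D)) (p (a+D+3)) (p (a+D+4)) := by
      rw [hWdef, conj_conj, conj_eq_of_commute c13, hZ3form, t3_conj, e1, e2, e3]
    rw [eZ4, eZ3]
  have hTZ3 : t3 (p (a+D)) (p (a+D+3)) (p (a+D+4)) * Z3⁻¹ =
      t3 (p (a+D)) (p (a+D+3)) (p (a+D+2)) := by
    rw [hZ3form, t3_inv (dne (by omega) (by omega) (by omega))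
      (dne (by omega) (by omega) (by omega)) (dne (by omega) (by omega) (by omega))]
    exact t3_P2 (dne (by omega) (by omega) (by omega)) (dne (by omega) (by omega) (by omega))
      (dne (by omega) (by omega) (by omega)) (dne (by omega) (by omega) (by omega))
      (dne (by omega) (by omega) (by omega)) (dne (by omega) (by omega) (by omega))
  have cV4 : Commute Z4 (t3 (p (a+D)) (p (a+D+3)) (p (a+D+2))) := by
    obtain ⟨h4, h5, h6⟩ := tri (a+2*D+2) (by omega)
    rw [hZ4]
    rw [zz_eq (a+2*D+2) (a+2*D+3) (a+2*D+4) (by omega) (by omega)]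
    refine (t3_commute (dne (by omega) (by omega) (by omega))
      (dne (by omega) (by omega) (by omega)) (dne (by omega) (by omega) (by omega))
      ?_ ?_ ?_ ?_ ?_ ?_ ?_ ?_ ?_ ?_ ?_ ?_).symm <;>
      exact dne (by omega) (by omega) (by omega)
  have hGamma : W * K2 * W⁻¹ * K2⁻¹ = t3 (p (a+D)) (p (a+D+3)) (p (a+D+2)) := by
    rw [step1, hK2def, mul_inv_rev]
    calc Z4 * t3 (p (a+D)) (p (a+D+3)) (p (a+D+4)) * (Z3⁻¹ * Z4⁻¹)
        = Z4 * (t3 (p (a+D)) (p (a+D+3)) (p (a+D+4)) * Z3⁻¹) * Z4⁻¹ := by group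
      _ = Z4 * t3 (p (a+D)) (p (a+D+3)) (p (a+D+2)) * Z4⁻¹ := by rw [hTZ3]
      _ = t3 (p (a+D)) (p (a+D+3)) (p (a+D+2)) := conj_eq_of_commute cV4
  have hGmem : t3 (p (a+D)) (p (a+D+3)) (p (a+D+2)) ∈ H := by
    rw [← hGamma]
    have hWm : W ∈ H := hWmem
    have hK2m : K2 ∈ H := hK2mem
    exact H.mul_mem (H.mul_mem (H.mul_mem hWm hK2m) (H.inv_mem hWm)) (H.inv_mem hK2m)
  have hv1 : σ * t3 (p (a+D)) (p (a+D+3)) (p (a+D+2)) * σ⁻¹ =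
      t3 (p (a+D+1)) (p (a+D+4)) (p (a+D+3)) := by
    rw [t3_conj, hstep, hstep, hstep,
      show a+D+3+1 = a+D+4 from by omega, show a+D+2+1 = a+D+3 from by omega]
  have hv1mem : t3 (p (a+D+1)) (p (a+D+4)) (p (a+D+3)) ∈ H := by
    rw [← hv1]
    exact H.mul_mem (H.mul_mem hσH hGmem) (H.inv_mem hσH)
  have hfuse : t3 (p (a+D+1)) (p (a+D+4)) (p (a+D+3)) *
      t3 (p (a+D)) (p (a+D+3)) (p (a+D+2)) *
      (t3 (p (a+D+1)) (p (a+D+4)) (p (a+D+3)))⁻¹ = zz (a+D) := by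
    rw [t3_conj]
    have f1 : t3 (p (a+D+1)) (p (a+D+4)) (p (a+D+3)) (p (a+D)) = p (a+D) :=
      t3_fix (dne (by omega) (by omega) (by omega)) (dne (by omega) (by omega) (by omega))
        (dne (by omega) (by omega) (by omega)) (dne (by omega) (by omega) (by omega))
        (dne (by omega) (by omega) (by omega)) (dne (by omega) (by omega) (by omega))
    have f2 : t3 (p (a+D+1)) (p (a+D+4)) (p (a+D+3)) (p (a+D+3)) = p (a+D+1) :=
      t3_thd (dne (by omega) (by omega) (by omega)) (dne (by omega) (by omega) (by omega))
        (dne (by omega) (by omega) (by omega))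
    have f3 : t3 (p (a+D+1)) (p (a+D+4)) (p (a+D+3)) (p (a+D+2)) = p (a+D+2) :=
      t3_fix (dne (by omega) (by omega) (by omega)) (dne (by omega) (by omega) (by omega))
        (dne (by omega) (by omega) (by omega)) (dne (by omega) (by omega) (by omega))
        (dne (by omega) (by omega) (by omega)) (dne (by omega) (by omega) (by omega))
    rw [f1, f2, f3]
  have hzadmem : zz (a+D) ∈ H := by
    rw [← hfuse]
    exact H.mul_mem (H.mul_mem hv1mem hGmem) (H.inv_mem hv1mem)
  have zzper : ∀ t : ℕ, zz (m + t) = zz t := by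
    intro t
    simp only [hzz]
    rw [show m + t + 1 = m + (t+1) from by omega, show m + t + 2 = m + (t+2) from by omega,
      hper, hper, hper]
  have hz0 : zz 0 ∈ H := by
    have h := zzconj (m - (a+D)) (a+D)
    rw [show m - (a+D) + (a+D) = m from by omega] at h
    have hzm : zz m = zz 0 := by
      rw [show m = m + 0 from by omega, zzper]
    rw [hzm] at h
    rw [← h]
    exact H.mul_mem (H.mul_mem (H.pow_mem hσH _) hzadmem) (H.inv_mem (H.pow_mem hσH _))
  have sfam : ∀ t : ℕ, zz t ∈ H := by
    intro t
    have h := zzconj t 0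
    rw [show t + 0 = t from by omega] at h
    rw [← h]
    exact H.mul_mem (H.mul_mem (H.pow_mem hσH _) hz0) (H.inv_mem (H.pow_mem hσH _))
  have ladder : ∀ t : ℕ, 2 ≤ t → t ≤ m - 2 → t3 (p 0) (p 1) (p t) ∈ H := by
    intro t ht2
    induction t, ht2 using Nat.le_induction with
    | base =>
      intro _
      rw [show (2:ℕ) = 0 + 2 from rfl, show (1:ℕ) = 0 + 1 from rfl,
        ← zz_eq 0 (0+1) (0+2) rfl rfl]
      exact hz0
    | succ t ht ih =>
      intro hbt
      have hmem := ih (by omega)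
      obtain ⟨h1, h2, h3⟩ := tri t (by omega)
      have hzt : zz t = t3 (p t) (p (t+1)) (p (t+2)) := zz_eq t (t+1) (t+2) rfl rfl
      have key : zz t * t3 (p 0) (p 1) (p t) * (zz t)⁻¹ = t3 (p 0) (p 1) (p (t+1)) := by
        rw [hzt, t3_conj]
        have f1 : t3 (p t) (p (t+1)) (p (t+2)) (p 0) = p 0 :=
          t3_fix h1 h2 h3 (dne (by omega) (by omega) (by omega))
            (dne (by omega) (by omega) (by omega)) (dne (by omega) (by omega) (by omega))
        have f2 : t3 (p t) (p (t+1)) (p (t+2)) (p 1) = p 1 :=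
          t3_fix h1 h2 h3 (dne (by omega) (by omega) (by omega))
            (dne (by omega) (by omega) (by omega)) (dne (by omega) (by omega) (by omega))
        have f3 : t3 (p t) (p (t+1)) (p (t+2)) (p t) = p (t+1) := t3_fst h1 h2 h3
        rw [f1, f2, f3]
      rw [← key]
      exact H.mul_mem (H.mul_mem (sfam t) hmem) (H.inv_mem (sfam t))
  have Atop : t3 (p 0) (p 1) (p (m-1)) ∈ H := by
    have hm3 := ladder (m-3) (by omega) (by omega)
    obtain ⟨h1, h2, h3⟩ := tri (m-3) (by omega)
    rw [show (m-3) + 1 = m - 2 from by omega] at h1 h3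
    rw [show (m-3) + 2 = m - 1 from by omega] at h2 h3
    have hzform : zz (m-3) = t3 (p (m-3)) (p (m-2)) (p (m-1)) :=
      zz_eq (m-3) (m-2) (m-1) (by omega) (by omega)
    have hinvz : (zz (m-3))⁻¹ = t3 (p (m-3)) (p (m-1)) (p (m-2)) := by
      rw [hzform, t3_inv h1 h2 h3]
    have key : (zz (m-3))⁻¹ * t3 (p 0) (p 1) (p (m-3)) * ((zz (m-3))⁻¹)⁻¹ =
        t3 (p 0) (p 1) (p (m-1)) := by
      rw [hinvz, t3_conj]
      have f1 : t3 (p (m-3)) (p (m-1)) (p (m-2)) (p 0) = p 0 :=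
        t3_fix h2 h1 (Ne.symm h3) (dne (by omega) (by omega) (by omega))
          (dne (by omega) (by omega) (by omega)) (dne (by omega) (by omega) (by omega))
      have f2 : t3 (p (m-3)) (p (m-1)) (p (m-2)) (p 1) = p 1 :=
        t3_fix h2 h1 (Ne.symm h3) (dne (by omega) (by omega) (by omega))
          (dne (by omega) (by omega) (by omega)) (dne (by omega) (by omega) (by omega))
      have f3 : t3 (p (m-3)) (p (m-1)) (p (m-2)) (p (m-3)) = p (m-1) :=
        t3_fst h2 h1 (Ne.symm h3)
      rw [f1, f2, f3]
    rw [← key]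
    exact H.mul_mem (H.mul_mem (H.inv_mem (sfam (m-3))) hm3)
      (H.inv_mem (H.inv_mem (sfam (m-3))))
  have A' : ∀ t : ℕ, 2 ≤ t → t < m → t3 (p 0) (p 1) (p t) ∈ H := by
    intro t ht2 htm
    rcases Nat.lt_or_ge t (m-1) with h | h
    · exact ladder t ht2 (by omega)
    · rw [show t = m - 1 from by omega]
      exact Atop
  have base3 : ∀ u v : ℕ, 1 ≤ u → u < m → 1 ≤ v → v < m → u ≠ v →
      t3 (p 0) (p u) (p v) ∈ H := by
    intro u v hu1 hum hv1 hvm huv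
    rcases eq_or_ne u 1 with rfl | hu
    · exact A' v (by omega) hvm
    rcases eq_or_ne v 1 with rfl | hv
    · have hrw : t3 (p 0) (p u) (p 1) = (t3 (p 0) (p 1) (p u))⁻¹ := by
        rw [t3_inv (dne (by omega) (by omega) (by omega)) (dne (by omega) (by omega) (by omega))
          (dne (by omega) (by omega) (by omega))]
      rw [hrw]
      exact H.inv_mem (A' u (by omega) hum)
    · have key : t3 (p 0) (p 1) (p v) * t3 (p 0) (p u) (p 1) = t3 (p 0) (p u) (p v) :=
        t3_P1 (dne (by omega) (by omega) (by omega)) (dne (by omega) (by omega) (by omega))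
          (dne (by omega) (by omega) (by omega)) (dne (by omega) (by omega) (by omega))
          (dne (by omega) (by omega) (by omega)) (dne (by omega) (by omega) (by omega))
      rw [← key]
      have hrw : t3 (p 0) (p u) (p 1) = (t3 (p 0) (p 1) (p u))⁻¹ := by
        rw [t3_inv (dne (by omega) (by omega) (by omega)) (dne (by omega) (by omega) (by omega))
          (dne (by omega) (by omega) (by omega))]
      rw [hrw]
      exact H.mul_mem (A' v (by omega) hvm) (H.inv_mem (A' u (by omega) hum))
  have psurj : ∀ y : α, ∃ t : ℕ, t < m ∧ p t = y := by
    intro y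
    have hne : ∀ w : α, σ w ≠ w := fun w =>
      Equiv.Perm.mem_support.mp (by rw [hs]; exact Finset.mem_univ w)
    obtain ⟨i, hi⟩ := hc.exists_pow_eq (hne x) (hne y)
    exact ⟨i % m, Nat.mod_lt _ (by omega), by rw [hmod]; exact hi⟩
  have all3 : ∀ y1 y2 y3 : α, y1 ≠ y2 → y1 ≠ y3 → y2 ≠ y3 → t3 y1 y2 y3 ∈ H := by
    intro y1 y2 y3 h12 h13 h23
    obtain ⟨t1, ht1m, ht1⟩ := psurj y1
    obtain ⟨t2, ht2m, ht2⟩ := psurj y2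
    obtain ⟨t3', ht3m, ht3⟩ := psurj y3
    set s := m - t1 with hsdef
    have hσs : σ ^ s ∈ H := H.pow_mem hσH s
    have h1 : (σ^s) y1 = p 0 := by
      rw [← ht1, hshift, show s + t1 = m + 0 from by omega, hper]
    set u := (s + t2) % m with hudef
    set v := (s + t3') % m with hvdef
    have h2 : (σ^s) y2 = p u := by rw [← ht2, hshift, hudef, hmod]
    have h3 : (σ^s) y3 = p v := by rw [← ht3, hshift, hvdef, hmod]
    have hum : u < m := Nat.mod_lt _ (by omega)
    have hvm : v < m := Nat.mod_lt _ (by omega)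
    have hu0 : u ≠ 0 := by
      intro h
      apply h12
      apply (σ^s).injective
      rw [h1, h2, h]
    have hv0 : v ≠ 0 := by
      intro h
      apply h13
      apply (σ^s).injective
      rw [h1, h3, h]
    have huv : u ≠ v := by
      intro h
      apply h23
      apply (σ^s).injective
      rw [h2, h3, h]
    have hT : t3 (p 0) (p u) (p v) ∈ H := base3 u v (by omega) hum (by omega) hvm huv
    have hconj := t3_conj (σ^s) y1 y2 y3
    rw [h1, h2, h3] at hconj
    have hrw : t3 y1 y2 y3 = (σ^s)⁻¹ * (σ^s * t3 y1 y2 y3 * (σ^s)⁻¹) * σ^s := by group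
    rw [hrw, hconj]
    exact H.mul_mem (H.mul_mem (H.inv_mem hσs) hT) hσs
  have alt_le : alternatingGroup α ≤ H := by
    rw [← Equiv.Perm.closure_three_cycles_eq_alternating, Subgroup.closure_le]
    intro ζ hζ
    simp only [Set.mem_setOf_eq] at hζ
    obtain ⟨y, hy, -⟩ := hζ.isCycle
    have h3 : ζ ^ 3 = 1 := by
      rw [← hζ.orderOf]; exact pow_orderOf_eq_one ζ
    have hζ3y : ζ (ζ (ζ y)) = y := by
      have hy3 : (ζ ^ 3) y = y := by rw [h3]; rfl
      calc ζ (ζ (ζ y)) = (ζ ^ 3) y := by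
            rw [pow_succ, pow_succ, pow_one, Equiv.Perm.mul_apply, Equiv.Perm.mul_apply]
        _ = y := hy3
    have d12 : y ≠ ζ y := Ne.symm hy
    have d23 : ζ y ≠ ζ (ζ y) := fun h => hy ((ζ.injective h).symm)
    have d13 : y ≠ ζ (ζ y) := by
      intro h
      have h2 := congrArg ζ h
      rw [hζ3y] at h2
      exact hy h2
    have hsupp : ζ.support = {y, ζ y, ζ (ζ y)} := by
      have hsub : ({y, ζ y, ζ (ζ y)} : Finset α) ⊆ ζ.support := by
        intro w hw
        simp only [Finset.mem_insert, Finset.mem_singleton] at hw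
        rcases hw with rfl | rfl | rfl
        · exact Equiv.Perm.mem_support.mpr hy
        · exact Equiv.Perm.mem_support.mpr (Ne.symm d23)
        · exact Equiv.Perm.mem_support.mpr (by rw [hζ3y]; exact d13)
      have hcard : ({y, ζ y, ζ (ζ y)} : Finset α).card = 3 := by
        rw [Finset.card_insert_of_notMem (by simp [d12, d13]),
          Finset.card_insert_of_notMem (by simp [d23]), Finset.card_singleton]
      exact (Finset.eq_of_subset_of_card_le hsub (le_of_eq (by rw [hζ.card_support, hcard]))).symm
    have hrep : ζ = t3 y (ζ y) (ζ (ζ y)) := by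
      ext w
      by_cases hw : w ∈ ζ.support
      · rw [hsupp] at hw
        simp only [Finset.mem_insert, Finset.mem_singleton] at hw
        rcases hw with rfl | rfl | rfl
        · rw [t3_fst d12 d13 d23]
        · rw [t3_snd d12 d13 d23]
        · rw [t3_thd d12 d13 d23, hζ3y]
      · have hfix : ζ w = w := Equiv.Perm.notMem_support.mp hw
        rw [hsupp] at hw
        simp only [Finset.mem_insert, Finset.mem_singleton, not_or] at hw
        rw [hfix, t3_fix d12 d13 d23 hw.1 hw.2.1 hw.2.2]
    rw [hrep]
    exact all3 _ _ _ d12 d13 d23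
  have hsgn : Equiv.Perm.sign σ = -1 := by
    rw [hc.sign, hs, Finset.card_univ, ← hmdef, Even.neg_one_pow he]
  rw [Subgroup.eq_top_iff']
  intro f
  rcases Int.units_eq_one_or (Equiv.Perm.sign f) with h1 | h1
  · exact alt_le (Equiv.Perm.mem_alternatingGroup.mpr h1)
  · have hfs : Equiv.Perm.sign (f * σ) = 1 := by
      rw [map_mul, h1, hsgn]
      exact Int.units_mul_self (-1)
    have hmem : f * σ ∈ H := alt_le (Equiv.Perm.mem_alternatingGroup.mpr hfs)
    have hres := H.mul_mem hmem (H.inv_mem hσH)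
    rwa [mul_inv_cancel_right] at hres

end PGCS

/-- For `k ≥ 1` and even `m ≥ 6k+3`, there are `m`-cycles `g₁, …, g_k` in `Sym(m)` such
that every pair `g_i, g_j` with `i ≠ j` generates all of `Sym(m)`. -/
theorem pairwise_generating_cycles_sym (k m : ℕ) (hk : 1 ≤ k) (hm : 6 * k + 3 ≤ m)
    (hme : Even m) :
    ∃ g : Fin k → Equiv.Perm (Fin m),
      (∀ i : Fin k, (g i).IsCycle ∧ (g i).support = Finset.univ) ∧
      (∀ i j : Fin k, i ≠ j → Subgroup.closure {g i, g j} = ⊤) := by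
  classical
  obtain ⟨n, rfl⟩ : ∃ n, m = n + 2 := ⟨m - 2, by omega⟩
  set σ : Equiv.Perm (Fin (n+2)) := finRotate (n+2) with hσdef
  have hcσ : σ.IsCycle := isCycle_finRotate
  have hsσ : σ.support = Finset.univ := support_finRotate
  have hcard : Fintype.card (Fin (n+2)) = n + 2 := Fintype.card_fin _
  set x : Fin (n+2) := 0 with hxdef
  set p : ℕ → Fin (n+2) := fun t => (σ^t) x with hp
  have hstep : ∀ t : ℕ, σ (p t) = p (t+1) := by
    intro t; simp only [hp]; rw [← Equiv.Perm.mul_apply, ← pow_succ']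
  have hinj : ∀ {s t : ℕ}, s < n+2 → t < n+2 → p s = p t → s = t := by
    intro s t hsm htm h
    simp only [hp] at h
    exact PGCS.cycle_pow_apply_inj hcσ hsσ x (by rw [hcard]; omega) (by rw [hcard]; omega) h
  have dne : ∀ {s t : ℕ}, s < n+2 → t < n+2 → s ≠ t → p s ≠ p t := by
    intro s t hsm htm hne h
    exact hne (hinj hsm htm h)
  set τ : Fin k → Equiv.Perm (Fin (n+2)) :=
    fun i => Equiv.swap (p (3*(i:ℕ))) (p (3*(i:ℕ)+1)) with hτ
  refine ⟨fun i => τ i * σ * (τ i)⁻¹, ?_, ?_⟩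
  · intro i
    refine ⟨hcσ.conj, ?_⟩
    rw [Equiv.Perm.support_conj]
    apply Finset.eq_univ_of_card
    rw [Finset.card_map, hsσ, Finset.card_univ]
  · have key : ∀ i j : Fin k, (i:ℕ) < (j:ℕ) →
        Subgroup.closure {τ i * σ * (τ i)⁻¹, τ j * σ * (τ j)⁻¹} = ⊤ := by
      intro i j hij
      have hik : (i:ℕ) < k := i.isLt
      have hjk : (j:ℕ) < k := j.isLt
      set a : ℕ := 3*(i:ℕ) with ha
      set b : ℕ := 3*(j:ℕ) with hbdef
      have hτi : τ i = Equiv.swap (p a) (p (a+1)) := by simp only [hτ, ha]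
      have hτj : τ j = Equiv.swap (p b) (p (b+1)) := by simp only [hτ, hbdef]
      set D : ℕ := b - a with hD
      have hbD : a + D = b := by omega
      set ρ : Equiv.Perm (Fin (n+2)) := τ i * τ j with hρ
      set H := Subgroup.closure
        ({σ, ρ * σ * ρ⁻¹} : Set (Equiv.Perm (Fin (n+2)))) with hH
      have hσH : σ ∈ H := Subgroup.subset_closure (Set.mem_insert _ _)
      have hρσH : ρ * σ * ρ⁻¹ ∈ H :=
        Subgroup.subset_closure (Set.mem_insert_of_mem _ rfl)
      -- the conjugation identity for τ j
      have hswc : τ j * σ * τ j * σ⁻¹ = PGCS.t3 (p b) (p (b+1)) (p (b+2)) := by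
        have hb1 : σ (p b) ≠ p b := by
          rw [hstep]; exact dne (by omega) (by omega) (by omega)
        have hb2 : σ (σ (p b)) ≠ p b := by
          rw [hstep, hstep, show b+1+1 = b+2 from by omega]
          exact dne (by omega) (by omega) (by omega)
        have hb3 : σ (σ (p b)) ≠ σ (p b) := by
          rw [hstep, hstep, show b+1+1 = b+2 from by omega]
          exact dne (by omega) (by omega) (by omega)
        have hres := PGCS.swap_cycle_conj hb1 hb2 hb3
        rw [hstep, hstep, show b+1+1 = b+2 from by omega] at hres
        rw [hτj]
        exact hres
      have hswap_i : σ * τ i * σ⁻¹ = Equiv.swap (p (a+1)) (p (a+2)) := by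
        rw [hτi, show p (a+2) = σ (p (a+1)) from (hstep (a+1)).symm,
          show p (a+1) = σ (p a) from (hstep a).symm, Equiv.swap_apply_apply]
      have hcomm_ib : Commute (Equiv.swap (p a) (p (a+1)))
          (PGCS.t3 (p b) (p (b+1)) (p (b+2))) := by
        refine PGCS.swap_t3_commute ?_ ?_ ?_ ?_ ?_ ?_ ?_ ?_ ?_ <;>
          exact dne (by omega) (by omega) (by omega)
      have hWid : ρ * σ * ρ⁻¹ * σ⁻¹ =
          PGCS.t3 (p b) (p (b+1)) (p (b+2)) * PGCS.t3 (p a) (p (a+1)) (p (a+2)) := by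
        have e0 : ρ * σ * ρ⁻¹ * σ⁻¹ = τ i * (τ j * σ * τ j * σ⁻¹) * (σ * τ i * σ⁻¹) := by
          simp only [hρ, mul_inv_rev, hτi, hτj, Equiv.swap_inv]
          group
        rw [e0, hswc, hswap_i, hτi, hcomm_ib.eq, mul_assoc]
        rfl
      have hWmem : PGCS.t3 (p (a+D)) (p (a+D+1)) (p (a+D+2)) *
          PGCS.t3 (p a) (p (a+1)) (p (a+2)) ∈ H := by
        rw [show a + D = b from hbD, ← hWid]
        exact H.mul_mem hρσH (H.inv_mem hσH)
      have hW' : PGCS.t3 ((σ^(a+D)) x) ((σ^(a+D+1)) x) ((σ^(a+D+2)) x) *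
          PGCS.t3 ((σ^a) x) ((σ^(a+1)) x) ((σ^(a+2)) x) ∈ H := by
        simpa only [hp] using hWmem
      have htop : H = ⊤ := by
        refine PGCS.pair_gen hcσ hsσ ?_ x a D ?_ ?_ H hσH hW'
        · rw [hcard]; exact hme
        · omega
        · rw [hcard]; omega
      -- transport along conjugation by τ i
      set φ := MulAut.conj (τ i) with hφdef
      have hτ2 : τ i * τ i = 1 := by rw [hτi]; exact Equiv.swap_mul_self _ _
      have hφgi : φ (τ i * σ * (τ i)⁻¹) = σ := by
        simp only [hφdef, MulAut.conj_apply]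
        calc τ i * (τ i * σ * (τ i)⁻¹) * (τ i)⁻¹
            = (τ i * τ i) * σ * ((τ i * τ i))⁻¹ := by group
          _ = σ := by rw [hτ2]; simp
      have hφgj : φ (τ j * σ * (τ j)⁻¹) = ρ * σ * ρ⁻¹ := by
        simp only [hφdef, MulAut.conj_apply, hρ]
        group
      have hmapcl : Subgroup.map φ.toMonoidHom
          (Subgroup.closure {τ i * σ * (τ i)⁻¹, τ j * σ * (τ j)⁻¹}) = H := by
        have himg : (⇑φ.toMonoidHom '' {τ i * σ * (τ i)⁻¹, τ j * σ * (τ j)⁻¹})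
            = ({σ, ρ * σ * ρ⁻¹} : Set (Equiv.Perm (Fin (n+2)))) := by
          rw [Set.image_pair]
          simp only [MulEquiv.coe_toMonoidHom]
          rw [hφgi, hφgj]
        rw [MonoidHom.map_closure, himg]
      rw [Subgroup.eq_top_iff']
      intro y
      have hy' : φ y ∈ Subgroup.map φ.toMonoidHom
          (Subgroup.closure {τ i * σ * (τ i)⁻¹, τ j * σ * (τ j)⁻¹}) := by
        rw [hmapcl, htop]
        exact Subgroup.mem_top _
      obtain ⟨w, hw, hww⟩ := Subgroup.mem_map.mp hy'
      have hwy : w = y := φ.injective (by simpa using hww)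
      exact hwy ▸ hw
    intro i j hij
    rcases Nat.lt_or_ge (i:ℕ) (j:ℕ) with h | h
    · exact key i j h
    · have h2 : (j:ℕ) < (i:ℕ) := by
        rcases Nat.lt_or_ge (j:ℕ) (i:ℕ) with h' | h'
        · exact h'
        · exact absurd (Fin.ext (le_antisymm h' h)) hij
      rw [Set.pair_comm]
      exact key j i h2
end

section
/- Let k be a positive integer and m ≥ 6k+3 with m odd. Then there exist m-cycles g₁, …, g_k in Sym(m) such that for every pair i ≠ j, the subgroup generated by g_i and g_j equals the alternating group Alt(m). -/
open Equiv Equiv.Perm Finset Subgroup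


theorem alt_le_closure_adj3 {α : Type*} [DecidableEq α] [Fintype α]
    {σ : Equiv.Perm α} (h1 : σ.IsCycle) (h2 : σ.support = Finset.univ) (x : α) :
    alternatingGroup α ≤
      Subgroup.closure ({σ, Equiv.swap x (σ x) * Equiv.swap (σ x) (σ (σ x))} : Set (Equiv.Perm α)) := by
  set H := Subgroup.closure
      ({σ, Equiv.swap x (σ x) * Equiv.swap (σ x) (σ (σ x))} : Set (Equiv.Perm α)) with hH
  have hmove : ∀ y : α, σ y ≠ y := fun y =>
    mem_support.mp (by rw [h2]; exact Finset.mem_univ y)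
  have h3 : σ ∈ H := subset_closure (Set.mem_insert σ _)
  have h4 : Equiv.swap x (σ x) * Equiv.swap (σ x) (σ (σ x)) ∈ H :=
    subset_closure (Set.mem_insert_of_mem _ (Set.mem_singleton _))
  have hy : ∀ n : ℕ, (σ ^ (n + 1) : Equiv.Perm α) x = σ ((σ ^ n) x) := fun n => by
    rw [pow_succ']; rfl
  have step1 : ∀ n : ℕ,
      Equiv.swap x (σ x) * Equiv.swap ((σ ^ n) x) ((σ ^ (n + 1) : Equiv.Perm α) x) ∈ H := by
    intro n
    induction n with
    | zero =>
      simp only [pow_zero, zero_add, pow_one, Equiv.Perm.one_apply, Equiv.swap_mul_self]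
      exact H.one_mem
    | succ n ih =>
      have key : Equiv.swap x (σ x) *
          Equiv.swap ((σ ^ (n + 1) : Equiv.Perm α) x) ((σ ^ (n + 2) : Equiv.Perm α) x)
          = (Equiv.swap x (σ x) * Equiv.swap (σ x) (σ (σ x))) *
            (σ * (Equiv.swap x (σ x) *
              Equiv.swap ((σ ^ n) x) ((σ ^ (n + 1) : Equiv.Perm α) x)) * σ⁻¹) := by
        have c1 : σ * (Equiv.swap x (σ x) *
            Equiv.swap ((σ ^ n) x) ((σ ^ (n + 1) : Equiv.Perm α) x)) * σ⁻¹
            = Equiv.swap (σ x) (σ (σ x)) *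
              Equiv.swap (σ ((σ ^ n) x)) (σ ((σ ^ (n + 1) : Equiv.Perm α) x)) := by
          rw [swap_apply_apply, swap_apply_apply]; group
        rw [c1, ← hy n, ← hy (n + 1), mul_assoc, Equiv.swap_mul_self_mul]
      rw [key]
      exact H.mul_mem h4 (H.mul_mem (H.mul_mem h3 ih) (H.inv_mem h3))
  have step2 : ∀ n : ℕ, x ≠ (σ ^ n) x →
      Equiv.swap x (σ x) * Equiv.swap x ((σ ^ n) x) ∈ H := by
    intro n
    induction n with
    | zero => intro h; simp at h
    | succ n ih =>
      intro hne
      by_cases hx : x = (σ ^ n) x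
      · have := step1 n
        rwa [← hx] at this
      · have hswap := swap_apply_apply
          (Equiv.swap ((σ ^ n) x) ((σ ^ (n + 1) : Equiv.Perm α) x)) x ((σ ^ n) x)
        rw [swap_apply_of_ne_of_ne hx hne, swap_apply_left] at hswap
        have key : Equiv.swap x (σ x) * Equiv.swap x ((σ ^ (n + 1) : Equiv.Perm α) x)
            = (Equiv.swap x (σ x) *
                Equiv.swap ((σ ^ n) x) ((σ ^ (n + 1) : Equiv.Perm α) x)) *
              (Equiv.swap x (σ x) * Equiv.swap x ((σ ^ n) x))⁻¹ *
              (Equiv.swap x (σ x) *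
                Equiv.swap ((σ ^ n) x) ((σ ^ (n + 1) : Equiv.Perm α) x)) := by
          rw [hswap]
          simp only [mul_inv_rev, Equiv.swap_inv, mul_assoc, Equiv.swap_mul_self_mul]
        rw [key]
        exact H.mul_mem (H.mul_mem (step1 n) (H.inv_mem (ih hx))) (step1 n)
  have step3 : ∀ y : α, y ≠ x → Equiv.swap x (σ x) * Equiv.swap x y ∈ H := by
    intro y hyx
    obtain ⟨n, hn⟩ := h1.exists_pow_eq (hmove x) (hmove y)
    rw [← hn]
    exact step2 n (fun h => hyx (by rw [← hn, ← h]))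
  have step4 : ∀ y z : α, y ≠ z → Equiv.swap x (σ x) * Equiv.swap y z ∈ H := by
    intro y z hyz
    by_cases hy' : y = x
    · rw [hy']
      exact step3 z (fun h => hyz (hy'.trans h.symm))
    by_cases hz' : z = x
    · rw [hz', Equiv.swap_comm y x]
      exact step3 y hy'
    · have h5 := swap_apply_apply (Equiv.swap x y) x z
      rw [swap_apply_left, swap_apply_of_ne_of_ne hz' (Ne.symm hyz)] at h5
      have key : Equiv.swap x (σ x) * Equiv.swap y z
          = (Equiv.swap x (σ x) * Equiv.swap x y) *
            (Equiv.swap x (σ x) * Equiv.swap x z)⁻¹ *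
            (Equiv.swap x (σ x) * Equiv.swap x y) := by
        rw [h5]
        simp only [mul_inv_rev, Equiv.swap_inv, mul_assoc, Equiv.swap_mul_self_mul]
      rw [key]
      exact H.mul_mem (H.mul_mem (step3 y hy') (H.inv_mem (step3 z hz'))) (step3 y hy')
  have final : ∀ f : Equiv.Perm α,
      (Equiv.Perm.sign f = 1 → f ∈ H) ∧
      (Equiv.Perm.sign f = -1 → Equiv.swap x (σ x) * f ∈ H) := by
    intro f
    refine Equiv.Perm.swap_induction_on f ⟨fun _ => H.one_mem, fun h => by simp at h⟩ ?_
    rintro f a b hab ⟨ih1, ih2⟩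
    constructor
    · intro hs
      have hf : Equiv.Perm.sign f = -1 := by
        rcases Int.units_eq_one_or (Equiv.Perm.sign f) with h | h
        · exfalso
          rw [Equiv.Perm.sign_mul, Equiv.Perm.sign_swap hab, h, mul_one] at hs
          exact absurd hs (by decide)
        · exact h
      have key : Equiv.swap a b * f
          = (Equiv.swap x (σ x) * Equiv.swap a b)⁻¹ *
            (Equiv.swap x (σ x) * f) := by
        simp only [mul_inv_rev, Equiv.swap_inv, mul_assoc, Equiv.swap_mul_self_mul]
      rw [key]
      exact H.mul_mem (H.inv_mem (step4 a b hab)) (ih2 hf)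
    · intro hs
      have hf : Equiv.Perm.sign f = 1 := by
        rcases Int.units_eq_one_or (Equiv.Perm.sign f) with h | h
        · exact h
        · exfalso
          rw [Equiv.Perm.sign_mul, Equiv.Perm.sign_swap hab, h] at hs
          exact absurd hs (by decide)
      rw [← mul_assoc]
      exact H.mul_mem (step4 a b hab) (ih1 hf)
  intro g hg
  exact (final g).1 (Equiv.Perm.mem_alternatingGroup.mp hg)

/-- value of `finRotate` -/
lemma finRotate_val {m : ℕ} (hm : 0 < m) (x : Fin m) :
    ((finRotate m) x : ℕ) = if (x : ℕ) + 1 = m then 0 else (x : ℕ) + 1 := by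
  rcases m with _ | n
  · omega
  · rw [coe_finRotate]
    rcases eq_or_ne x (Fin.last n) with h | h
    · rw [if_pos h, if_pos]
      rw [h]; simp [Fin.last]
    · rw [if_neg h, if_neg]
      intro hc
      exact h (Fin.ext (by simpa using Nat.succ_injective hc))

variable {m r : ℕ}

/-- the `r`-cycle `(0 1 … r-1)` inside `Perm (Fin m)` -/
def rhoPerm (hr0 : 0 < r) (hrm : r < m) : Equiv.Perm (Fin m) where
  toFun x := if (x : ℕ) < r then ⟨((x : ℕ) + 1) % r, (Nat.mod_lt _ hr0).trans hrm⟩ else x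
  invFun x := if (x : ℕ) < r then ⟨((x : ℕ) + (r - 1)) % r, (Nat.mod_lt _ hr0).trans hrm⟩ else x
  left_inv := by
    intro x
    dsimp only
    by_cases h : (x : ℕ) < r
    · rw [if_pos h]
      have h2 : (((x : ℕ) + 1) % r) < r := Nat.mod_lt _ hr0
      rw [if_pos h2]
      apply Fin.ext
      show (((x : ℕ) + 1) % r + (r - 1)) % r = (x : ℕ)
      rw [Nat.mod_add_mod, show (x : ℕ) + 1 + (r - 1) = (x : ℕ) + r by omega,
        Nat.add_mod_right, Nat.mod_eq_of_lt h]
    · rw [if_neg h, if_neg h]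
  right_inv := by
    intro x
    dsimp only
    by_cases h : (x : ℕ) < r
    · rw [if_pos h]
      have h2 : (((x : ℕ) + (r - 1)) % r) < r := Nat.mod_lt _ hr0
      rw [if_pos h2]
      apply Fin.ext
      show (((x : ℕ) + (r - 1)) % r + 1) % r = (x : ℕ)
      rw [Nat.mod_add_mod, show (x : ℕ) + (r - 1) + 1 = (x : ℕ) + r by omega,
        Nat.add_mod_right, Nat.mod_eq_of_lt h]
    · rw [if_neg h, if_neg h]

lemma rhoPerm_apply_val (hr0 : 0 < r) (hrm : r < m) (x : Fin m) :
    ((rhoPerm hr0 hrm x) : ℕ) = if (x : ℕ) < r then ((x : ℕ) + 1) % r else (x : ℕ) := by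
  by_cases h : (x : ℕ) < r
  · rw [if_pos h]; show ((if (x : ℕ) < r then _ else x : Fin m) : ℕ) = _
    rw [if_pos h]
  · rw [if_neg h]; show ((if (x : ℕ) < r then _ else x : Fin m) : ℕ) = _
    rw [if_neg h]

lemma rhoPerm_pow_val (hr0 : 0 < r) (hrm : r < m) (c : ℕ) (x : Fin m) :
    (((rhoPerm hr0 hrm) ^ c) x : ℕ) = if (x : ℕ) < r then ((x : ℕ) + c) % r else (x : ℕ) := by
  induction c generalizing x with
  | zero =>
    simp only [pow_zero, Equiv.Perm.one_apply, Nat.add_zero]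
    split_ifs with h
    · exact (Nat.mod_eq_of_lt h).symm
    · rfl
  | succ c ih =>
    rw [pow_succ, Equiv.Perm.mul_apply, ih ((rhoPerm hr0 hrm) x), rhoPerm_apply_val]
    by_cases h : (x : ℕ) < r
    · have h2 : ((x : ℕ) + 1) % r < r := Nat.mod_lt _ hr0
      rw [if_pos h, if_pos h2, if_pos h, Nat.mod_add_mod]
      congr 1
      omega
    · simp only [if_neg h]

lemma rhoPerm_pow_r (hr0 : 0 < r) (hrm : r < m) : (rhoPerm hr0 hrm) ^ r = 1 := by
  apply Equiv.ext
  intro x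
  apply Fin.ext
  rw [show (((1 : Equiv.Perm (Fin m)) x : ℕ)) = (x : ℕ) from rfl, rhoPerm_pow_val]
  split_ifs with h
  · rw [Nat.add_mod_right, Nat.mod_eq_of_lt h]
  · rfl

/-- relabelling permutation: `t ↦ t·(c+1) mod r` on `[0,r)` -/
noncomputable def EPerm (hr0 : 0 < r) (hrm : r < m) (c : ℕ) (hcop : Nat.Coprime (c + 1) r) :
    Equiv.Perm (Fin m) :=
  Equiv.ofBijective
    (fun t => if (t : ℕ) < r then ⟨((t : ℕ) * (c + 1)) % r, (Nat.mod_lt _ hr0).trans hrm⟩ else t)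
    (by
      rw [← Finite.injective_iff_bijective]
      intro a b hab
      dsimp only at hab
      by_cases ha : (a : ℕ) < r <;> by_cases hb : (b : ℕ) < r
      · rw [if_pos ha, if_pos hb] at hab
        have h1 : ((a : ℕ) * (c + 1)) % r = ((b : ℕ) * (c + 1)) % r := by
          simpa [Fin.ext_iff] using hab
        have h2 : (a : ℕ) ≡ (b : ℕ) [MOD r] :=
          Nat.ModEq.cancel_right_of_coprime (by simpa [Nat.Coprime, Nat.gcd_comm] using hcop) h1
        have := h2.eq_of_lt_of_lt ha hb
        exact Fin.ext this
      · rw [if_pos ha, if_neg hb] at hab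
        exfalso
        have : ((a : ℕ) * (c + 1)) % r < r := Nat.mod_lt _ hr0
        rw [← hab] at hb
        exact hb this
      · rw [if_neg ha, if_pos hb] at hab
        exfalso
        have : ((b : ℕ) * (c + 1)) % r < r := Nat.mod_lt _ hr0
        rw [hab] at ha
        exact ha this
      · rw [if_neg ha, if_neg hb] at hab
        exact hab)

lemma EPerm_apply_val (hr0 : 0 < r) (hrm : r < m) (c : ℕ) (hcop : Nat.Coprime (c + 1) r)
    (t : Fin m) :
    ((EPerm hr0 hrm c hcop t) : ℕ) = if (t : ℕ) < r then ((t : ℕ) * (c + 1)) % r else (t : ℕ) := by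
  show (((if (t : ℕ) < r then _ else t) : Fin m) : ℕ) = _
  split_ifs with h <;> rfl

lemma g_mul_E_eq_E_mul_rot (hr0 : 0 < r) (hrm : r < m) (hrm1 : r + 1 < m) (c : ℕ)
    (hcop : Nat.Coprime (c + 1) r) :
    (finRotate m * (rhoPerm hr0 hrm) ^ c) * EPerm hr0 hrm c hcop
      = EPerm hr0 hrm c hcop * finRotate m := by
  have hm0 : 0 < m := by omega
  apply Equiv.ext
  intro t
  apply Fin.ext
  rw [Equiv.Perm.mul_apply, Equiv.Perm.mul_apply, Equiv.Perm.mul_apply]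
  rw [finRotate_val hm0, rhoPerm_pow_val, EPerm_apply_val, EPerm_apply_val, finRotate_val hm0]
  by_cases hT : (t : ℕ) < r
  · rw [if_pos hT]
    have he : ((t : ℕ) * (c + 1)) % r < r := Nat.mod_lt _ hr0
    rw [if_pos he, Nat.mod_add_mod ((t : ℕ) * (c + 1)) r c]
    set X := (t : ℕ) * (c + 1) + c with hX
    have hXr : X % r < r := Nat.mod_lt _ hr0
    rw [if_neg (by omega : ¬ (X % r + 1 = m))]
    by_cases hT1 : (t : ℕ) + 1 < r
    · rw [if_neg (by omega : ¬ ((t : ℕ) + 1 = m)), if_pos hT1]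
      -- goal : X % r + 1 = ((t+1) * (c+1)) % r
      have hXne : X % r ≠ r - 1 := by
        intro hc
        have h0 : (X + 1) % r = 0 := by
          rw [← Nat.mod_add_mod X r 1, hc, show r - 1 + 1 = r by omega, Nat.mod_self]
        have hdvd : r ∣ ((t : ℕ) + 1) * (c + 1) := by
          have : ((t : ℕ) + 1) * (c + 1) = X + 1 := by rw [hX]; ring
          rw [this]
          exact Nat.dvd_of_mod_eq_zero h0
        have : r ∣ (t : ℕ) + 1 :=
          (Nat.Coprime.dvd_of_dvd_mul_right (by simpa [Nat.coprime_comm] using hcop) hdvd)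
        have := Nat.le_of_dvd (by omega) this
        omega
      have h1 : ((t : ℕ) + 1) * (c + 1) = X + 1 := by rw [hX]; ring
      rw [h1, ← Nat.mod_add_mod X r 1, Nat.mod_eq_of_lt (by omega : X % r + 1 < r)]
    · -- t = r - 1
      have hTr : (t : ℕ) = r - 1 := by omega
      rw [if_neg (by omega : ¬ ((t : ℕ) + 1 = m)), if_neg (by omega : ¬ ((t : ℕ) + 1 < r))]
      -- goal : X % r + 1 = t + 1, i.e. X % r = r - 1
      have hXe : X = r * c + (r - 1) := by
        rw [hX, hTr]
        obtain ⟨s, rfl⟩ : ∃ s, r = s + 1 := ⟨r - 1, by omega⟩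
        simp only [Nat.add_sub_cancel]
        ring
      rw [hXe, Nat.mul_add_mod, Nat.mod_eq_of_lt (by omega)]
      omega
  · rw [if_neg hT, if_neg hT]
    by_cases hTm : (t : ℕ) + 1 = m
    · rw [if_pos hTm, if_pos hr0]
      simp
    · rw [if_neg hTm, if_neg (by omega : ¬ ((t : ℕ) + 1 < r))]

lemma g_eq_conj (hr0 : 0 < r) (hrm : r < m) (hrm1 : r + 1 < m) (c : ℕ)
    (hcop : Nat.Coprime (c + 1) r) :
    finRotate m * (rhoPerm hr0 hrm) ^ c
      = EPerm hr0 hrm c hcop * finRotate m * (EPerm hr0 hrm c hcop)⁻¹ :=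
  eq_mul_inv_of_mul_eq (g_mul_E_eq_E_mul_rot hr0 hrm hrm1 c hcop)

lemma g_isCycle (hr0 : 0 < r) (hrm : r < m) (hrm1 : r + 1 < m) (c : ℕ)
    (hcop : Nat.Coprime (c + 1) r) :
    (finRotate m * (rhoPerm hr0 hrm) ^ c).IsCycle := by
  rw [g_eq_conj hr0 hrm hrm1 c hcop]
  exact (isCycle_finRotate_of_le (by omega)).conj

lemma g_support (hr0 : 0 < r) (hrm : r < m) (hrm1 : r + 1 < m) (c : ℕ)
    (hcop : Nat.Coprime (c + 1) r) :
    (finRotate m * (rhoPerm hr0 hrm) ^ c).support = Finset.univ := by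
  rw [g_eq_conj hr0 hrm hrm1 c hcop, Equiv.Perm.support_conj,
    support_finRotate_of_le (by omega), Finset.map_univ_equiv]

section ThreeCycle

variable (hr0 : 0 < r) (hrm : r < m)

lemma rho_mk_lt (v : ℕ) (h : v + 1 < r) :
    rhoPerm hr0 hrm ⟨v, by omega⟩ = ⟨v + 1, by omega⟩ := by
  apply Fin.ext
  rw [rhoPerm_apply_val]
  dsimp only
  rw [if_pos (show v < r by omega)]
  exact Nat.mod_eq_of_lt h

lemma rho_mk_last : rhoPerm hr0 hrm ⟨r - 1, by omega⟩ = ⟨0, by omega⟩ := by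
  apply Fin.ext
  rw [rhoPerm_apply_val]
  dsimp only
  rw [if_pos (show r - 1 < r by omega), show r - 1 + 1 = r by omega, Nat.mod_self]

lemma rho_mk_fix (v : ℕ) (h1 : r ≤ v) (h2 : v < m) :
    rhoPerm hr0 hrm ⟨v, h2⟩ = ⟨v, h2⟩ := by
  apply Fin.ext
  rw [rhoPerm_apply_val]
  dsimp only
  rw [if_neg (by omega)]

end ThreeCycle

lemma rot_mk_lt {m : ℕ} (v : ℕ) (h : v + 1 < m) :
    finRotate m ⟨v, by omega⟩ = ⟨v + 1, h⟩ := by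
  apply Fin.ext
  rw [finRotate_val (by omega)]
  dsimp only
  rw [if_neg (by omega)]

lemma rot_mk_last {m : ℕ} (hm0 : 0 < m) : finRotate m ⟨m - 1, by omega⟩ = ⟨0, hm0⟩ := by
  apply Fin.ext
  rw [finRotate_val hm0]
  dsimp only
  rw [if_pos (by omega)]


lemma swap_mk_fix {m : ℕ} (a b w : ℕ) (ha : a < m) (hb : b < m) (hw : w < m)
    (h1 : w ≠ a) (h2 : w ≠ b) :
    Equiv.swap (⟨a, ha⟩ : Fin m) ⟨b, hb⟩ ⟨w, hw⟩ = ⟨w, hw⟩ :=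
  Equiv.swap_apply_of_ne_of_ne (Fin.ne_of_val_ne h1) (Fin.ne_of_val_ne h2)

section Comm

variable (hr0 : 0 < r) (hrm : r < m) (hr3 : 3 ≤ r) (hrm1 : r + 1 < m)

lemma comm1 :
    rhoPerm hr0 hrm * finRotate m =
      (Equiv.swap (⟨0, by omega⟩ : Fin m) ⟨1, by omega⟩ *
        Equiv.swap (⟨1, by omega⟩ : Fin m) ⟨r, by omega⟩) *
      (finRotate m * rhoPerm hr0 hrm) := by
  apply Equiv.ext
  intro x
  obtain ⟨v, hv⟩ := x
  simp only [Equiv.Perm.mul_apply]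
  by_cases c1 : v + 2 < r
  · rw [rho_mk_lt hr0 hrm v (by omega), rot_mk_lt v (by omega),
      rho_mk_lt hr0 hrm (v + 1) (by omega), rot_mk_lt (v + 1) (by omega),
      swap_mk_fix 1 r (v + 1 + 1) (by omega) (by omega) (by omega) (by omega) (by omega),
      swap_mk_fix 0 1 (v + 1 + 1) (by omega) (by omega) (by omega) (by omega) (by omega)]
  · by_cases c2 : v + 2 = r
    · rw [rho_mk_lt hr0 hrm v (by omega), rot_mk_lt v (by omega),
        show (⟨v + 1, by omega⟩ : Fin m) = ⟨r - 1, by omega⟩ by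
          simp only [Fin.mk.injEq]; omega,
        rho_mk_last hr0 hrm, rot_mk_lt (r - 1) (by omega),
        show (⟨r - 1 + 1, by omega⟩ : Fin m) = ⟨r, by omega⟩ by
          simp only [Fin.mk.injEq]; omega,
        Equiv.swap_apply_right, Equiv.swap_apply_right]
    · by_cases c3 : v + 1 = r
      · rw [show (⟨v, hv⟩ : Fin m) = ⟨r - 1, by omega⟩ by simp only [Fin.mk.injEq]; omega,
          rot_mk_lt (r - 1) (by omega),
          show (⟨r - 1 + 1, by omega⟩ : Fin m) = ⟨r, by omega⟩ by
            simp only [Fin.mk.injEq]; omega,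
          rho_mk_fix hr0 hrm r (by omega) (by omega),
          rho_mk_last hr0 hrm, rot_mk_lt 0 (by omega),
          show (⟨0 + 1, by omega⟩ : Fin m) = ⟨1, by omega⟩ by
            simp only [Fin.mk.injEq],
          Equiv.swap_apply_left,
          swap_mk_fix 0 1 r (by omega) (by omega) (by omega) (by omega) (by omega)]
      · by_cases c4 : v + 1 < m
        · rw [rho_mk_fix hr0 hrm v (by omega) hv, rot_mk_lt v (by omega),
            rho_mk_fix hr0 hrm (v + 1) (by omega) (by omega),
            swap_mk_fix 1 r (v + 1) (by omega) (by omega) (by omega) (by omega) (by omega),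
            swap_mk_fix 0 1 (v + 1) (by omega) (by omega) (by omega) (by omega) (by omega)]
        · rw [show (⟨v, hv⟩ : Fin m) = ⟨m - 1, by omega⟩ by simp only [Fin.mk.injEq]; omega,
            rot_mk_last (by omega), rho_mk_lt hr0 hrm 0 (by omega),
            show (⟨0 + 1, by omega⟩ : Fin m) = ⟨1, by omega⟩ by
              simp only [Fin.mk.injEq],
            rho_mk_fix hr0 hrm (m - 1) (by omega) (by omega),
            rot_mk_last (by omega),
            swap_mk_fix 1 r 0 (by omega) (by omega) (by omega) (by omega) (by omega),
            Equiv.swap_apply_left]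

lemma comm2 :
    rhoPerm hr0 hrm *
      (Equiv.swap (⟨0, by omega⟩ : Fin m) ⟨1, by omega⟩ *
        Equiv.swap (⟨1, by omega⟩ : Fin m) ⟨r, by omega⟩) =
    (Equiv.swap (⟨1, by omega⟩ : Fin m) ⟨2, by omega⟩ *
        Equiv.swap (⟨2, by omega⟩ : Fin m) ⟨r, by omega⟩) * rhoPerm hr0 hrm := by
  apply Equiv.ext
  intro x
  obtain ⟨v, hv⟩ := x
  simp only [Equiv.Perm.mul_apply]
  by_cases h0 : v = 0
  · subst h0
    rw [swap_mk_fix 1 r 0 (by omega) (by omega) (by omega) (by omega) (by omega),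
      Equiv.swap_apply_left, rho_mk_lt hr0 hrm 1 (by omega),
      rho_mk_lt hr0 hrm 0 (by omega),
      show (⟨0 + 1, by omega⟩ : Fin m) = ⟨1, by omega⟩ by simp only [Fin.mk.injEq],
      swap_mk_fix 2 r 1 (by omega) (by omega) (by omega) (by omega) (by omega),
      Equiv.swap_apply_left]
  · by_cases h1 : v = 1
    · subst h1
      rw [Equiv.swap_apply_left,
        swap_mk_fix 0 1 r (by omega) (by omega) (by omega) (by omega) (by omega),
        rho_mk_fix hr0 hrm r (by omega) (by omega),
        rho_mk_lt hr0 hrm 1 (by omega),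
        show (⟨1 + 1, by omega⟩ : Fin m) = ⟨2, by omega⟩ by simp only [Fin.mk.injEq],
        Equiv.swap_apply_left,
        swap_mk_fix 1 2 r (by omega) (by omega) (by omega) (by omega) (by omega)]
    · by_cases hr : v = r
      · rw [show (⟨v, hv⟩ : Fin m) = ⟨r, by omega⟩ by simp only [Fin.mk.injEq]; omega,
          Equiv.swap_apply_right, Equiv.swap_apply_right,
          rho_mk_lt hr0 hrm 0 (by omega),
          show (⟨0 + 1, by omega⟩ : Fin m) = ⟨1, by omega⟩ by simp only [Fin.mk.injEq],
          rho_mk_fix hr0 hrm r (by omega) (by omega),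
          Equiv.swap_apply_right, Equiv.swap_apply_right]
      · by_cases h4 : v + 1 < r
        · -- 2 ≤ v here
          rw [swap_mk_fix 1 r v (by omega) (by omega) (by omega) (by omega) (by omega),
            swap_mk_fix 0 1 v (by omega) (by omega) (by omega) (by omega) (by omega),
            rho_mk_lt hr0 hrm v (by omega),
            swap_mk_fix 2 r (v + 1) (by omega) (by omega) (by omega) (by omega) (by omega),
            swap_mk_fix 1 2 (v + 1) (by omega) (by omega) (by omega) (by omega) (by omega)]
        · by_cases h5 : v + 1 = r
          · rw [swap_mk_fix 1 r v (by omega) (by omega) (by omega) (by omega) (by omega),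
              swap_mk_fix 0 1 v (by omega) (by omega) (by omega) (by omega) (by omega),
              show (⟨v, hv⟩ : Fin m) = ⟨r - 1, by omega⟩ by simp only [Fin.mk.injEq]; omega,
              rho_mk_last hr0 hrm,
              swap_mk_fix 2 r 0 (by omega) (by omega) (by omega) (by omega) (by omega),
              swap_mk_fix 1 2 0 (by omega) (by omega) (by omega) (by omega) (by omega)]
          · -- r < v
            rw [swap_mk_fix 1 r v (by omega) (by omega) (by omega) (by omega) (by omega),
              swap_mk_fix 0 1 v (by omega) (by omega) (by omega) (by omega) (by omega),
              rho_mk_fix hr0 hrm v (by omega) (by omega),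
              swap_mk_fix 2 r v (by omega) (by omega) (by omega) (by omega) (by omega),
              swap_mk_fix 1 2 v (by omega) (by omega) (by omega) (by omega) (by omega)]

lemma AB_eq :
    (Equiv.swap (⟨0, by omega⟩ : Fin m) ⟨1, by omega⟩ *
        Equiv.swap (⟨1, by omega⟩ : Fin m) ⟨r, by omega⟩) *
      (Equiv.swap (⟨1, by omega⟩ : Fin m) ⟨2, by omega⟩ *
        Equiv.swap (⟨2, by omega⟩ : Fin m) ⟨r, by omega⟩) =
    Equiv.swap (⟨0, by omega⟩ : Fin m) ⟨1, by omega⟩ *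
      Equiv.swap (⟨1, by omega⟩ : Fin m) ⟨2, by omega⟩ := by
  apply Equiv.ext
  intro x
  obtain ⟨v, hv⟩ := x
  simp only [Equiv.Perm.mul_apply]
  by_cases h0 : v = 0
  · subst h0
    rw [swap_mk_fix 2 r 0 (by omega) (by omega) (by omega) (by omega) (by omega),
      swap_mk_fix 1 2 0 (by omega) (by omega) (by omega) (by omega) (by omega),
      swap_mk_fix 1 r 0 (by omega) (by omega) (by omega) (by omega) (by omega)]
  · by_cases h1 : v = 1
    · subst h1
      rw [swap_mk_fix 2 r 1 (by omega) (by omega) (by omega) (by omega) (by omega),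
        Equiv.swap_apply_left,
        swap_mk_fix 1 r 2 (by omega) (by omega) (by omega) (by omega) (by omega),
        swap_mk_fix 0 1 2 (by omega) (by omega) (by omega) (by omega) (by omega)]
    · by_cases h2 : v = 2
      · subst h2
        rw [Equiv.swap_apply_left,
          swap_mk_fix 1 2 r (by omega) (by omega) (by omega) (by omega) (by omega),
          Equiv.swap_apply_right, Equiv.swap_apply_right, Equiv.swap_apply_right,
          Equiv.swap_apply_right]
      · by_cases hr : v = r
        · rw [show (⟨v, hv⟩ : Fin m) = ⟨r, by omega⟩ by simp only [Fin.mk.injEq]; omega,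
            Equiv.swap_apply_right, Equiv.swap_apply_right, Equiv.swap_apply_left,
            swap_mk_fix 0 1 r (by omega) (by omega) (by omega) (by omega) (by omega),
            swap_mk_fix 1 2 r (by omega) (by omega) (by omega) (by omega) (by omega),
            swap_mk_fix 0 1 r (by omega) (by omega) (by omega) (by omega) (by omega)]
        · rw [swap_mk_fix 2 r v (by omega) (by omega) (by omega) (by omega) (by omega),
            swap_mk_fix 1 2 v (by omega) (by omega) (by omega) (by omega) (by omega),
            swap_mk_fix 1 r v (by omega) (by omega) (by omega) (by omega) (by omega)]

end Comm

/-- For `k ≥ 1` and odd `m ≥ 6k+3`, there are `m`-cycles `g₁, …, g_k` in `Sym(m)` such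
that every pair `g_i, g_j` with `i ≠ j` generates the alternating group `Alt(m)`. -/
theorem pairwise_generating_cycles_alt (k m : ℕ) (hk : 1 ≤ k) (hm : 6 * k + 3 ≤ m)
    (hmo : Odd m) :
    ∃ g : Fin k → Equiv.Perm (Fin m),
      (∀ i : Fin k, (g i).IsCycle ∧ (g i).support = Finset.univ) ∧
      (∀ i j : Fin k, i ≠ j → Subgroup.closure {g i, g j} = alternatingGroup (Fin m)) := by
  obtain ⟨r, hrp, hrk, hrk2⟩ := Nat.exists_prime_lt_and_le_two_mul (n := k + 1) (by omega)
  have hr3 : 3 ≤ r := by omega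
  have hr0 : 0 < r := by omega
  have hrm : r < m := by omega
  have hrm1 : r + 1 < m := by omega
  have hcop : ∀ c : ℕ, 0 < c + 1 → c + 1 < r → Nat.Coprime (c + 1) r := by
    intro c h1 h2
    refine Nat.coprime_comm.mp (hrp.coprime_iff_not_dvd.mpr fun hdvd => ?_)
    have := Nat.le_of_dvd h1 hdvd
    omega
  refine ⟨fun i => finRotate m * (rhoPerm hr0 hrm) ^ ((i : ℕ) + 1), fun i => ?_, fun i j hij => ?_⟩
  · have hc : Nat.Coprime ((i : ℕ) + 1 + 1) r := hcop _ (by omega) (by have := i.isLt; omega)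
    exact ⟨g_isCycle hr0 hrm hrm1 _ hc, g_support hr0 hrm hrm1 _ hc⟩
  · have hci : Nat.Coprime ((i : ℕ) + 1 + 1) r := hcop _ (by omega) (by have := i.isLt; omega)
    have hcj : Nat.Coprime ((j : ℕ) + 1 + 1) r := hcop _ (by omega) (by have := j.isLt; omega)
    set H := Subgroup.closure
      ({finRotate m * (rhoPerm hr0 hrm) ^ ((i : ℕ) + 1),
        finRotate m * (rhoPerm hr0 hrm) ^ ((j : ℕ) + 1)} : Set (Equiv.Perm (Fin m))) with hHdef
    have hgi : finRotate m * (rhoPerm hr0 hrm) ^ ((i : ℕ) + 1) ∈ H :=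
      Subgroup.subset_closure (Set.mem_insert _ _)
    have hgj : finRotate m * (rhoPerm hr0 hrm) ^ ((j : ℕ) + 1) ∈ H :=
      Subgroup.subset_closure (Set.mem_insert_of_mem _ (Set.mem_singleton _))
    apply le_antisymm
    · rw [Subgroup.closure_le]
      have heven : ∀ c : ℕ, Nat.Coprime (c + 1) r →
          finRotate m * (rhoPerm hr0 hrm) ^ c ∈ alternatingGroup (Fin m) := by
        intro c hc
        rw [Equiv.Perm.mem_alternatingGroup, (g_isCycle hr0 hrm hrm1 c hc).sign,
          g_support hr0 hrm hrm1 c hc, Finset.card_univ, Fintype.card_fin,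
          Odd.neg_one_pow hmo, neg_neg]
      intro x hx
      rcases hx with rfl | hx
      · exact heven _ hci
      · rw [Set.mem_singleton_iff] at hx
        rw [hx]
        exact heven _ hcj
    · -- first get a nontrivial power of ρ in H
      have hne : (i : ℕ) + 1 ≠ (j : ℕ) + 1 := by
        intro h
        exact hij (Fin.ext (by omega))
      obtain ⟨w, hw0, hwr, hρw⟩ : ∃ w, 0 < w ∧ w < r ∧ (rhoPerm hr0 hrm) ^ w ∈ H := by
        rcases Nat.lt_or_ge ((i : ℕ) + 1) ((j : ℕ) + 1) with hcd | hcd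
        · refine ⟨(j : ℕ) + 1 - ((i : ℕ) + 1), by omega, by have := i.isLt; have := j.isLt; omega, ?_⟩
          have key : (finRotate m * (rhoPerm hr0 hrm) ^ ((i : ℕ) + 1))⁻¹ *
              (finRotate m * (rhoPerm hr0 hrm) ^ ((j : ℕ) + 1)) =
              (rhoPerm hr0 hrm) ^ ((j : ℕ) + 1 - ((i : ℕ) + 1)) := by
            rw [show (j : ℕ) + 1 = ((i : ℕ) + 1) + ((j : ℕ) + 1 - ((i : ℕ) + 1)) by omega,
              pow_add]
            group
            congr 1
            omega
          exact key ▸ H.mul_mem (H.inv_mem hgi) hgj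
        · have hcd' : (j : ℕ) + 1 < (i : ℕ) + 1 := by omega
          refine ⟨(i : ℕ) + 1 - ((j : ℕ) + 1), by omega, by have := i.isLt; have := j.isLt; omega, ?_⟩
          have key : (finRotate m * (rhoPerm hr0 hrm) ^ ((j : ℕ) + 1))⁻¹ *
              (finRotate m * (rhoPerm hr0 hrm) ^ ((i : ℕ) + 1)) =
              (rhoPerm hr0 hrm) ^ ((i : ℕ) + 1 - ((j : ℕ) + 1)) := by
            rw [show (i : ℕ) + 1 = ((j : ℕ) + 1) + ((i : ℕ) + 1 - ((j : ℕ) + 1)) by omega,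
              pow_add]
            group
            congr 1
            omega
          exact key ▸ H.mul_mem (H.inv_mem hgj) hgi
      -- ρ itself lies in H
      have hρH : rhoPerm hr0 hrm ∈ H := by
        have hwcop : Nat.Coprime w r :=
          Nat.coprime_comm.mp (hrp.coprime_iff_not_dvd.mpr fun hdvd => by
            have := Nat.le_of_dvd hw0 hdvd; omega)
        obtain ⟨a, -, ha⟩ := Nat.exists_mul_mod_eq_one_of_coprime hwcop (by omega)
        have h2 := Nat.div_add_mod (w * a) r
        rw [ha] at h2
        have h1 : (rhoPerm hr0 hrm) ^ (w * a) = rhoPerm hr0 hrm := by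
          calc (rhoPerm hr0 hrm) ^ (w * a)
              = (rhoPerm hr0 hrm) ^ (r * (w * a / r) + 1) := by rw [h2]
            _ = ((rhoPerm hr0 hrm) ^ r) ^ (w * a / r) * (rhoPerm hr0 hrm) ^ 1 := by
                rw [pow_add, pow_mul]
            _ = rhoPerm hr0 hrm := by rw [rhoPerm_pow_r, one_pow, pow_one, one_mul]
        rw [← h1, pow_mul]
        exact H.pow_mem hρw a
      -- σ lies in H
      have hσH : finRotate m ∈ H := by
        have key : (finRotate m * (rhoPerm hr0 hrm) ^ ((i : ℕ) + 1)) *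
            ((rhoPerm hr0 hrm) ^ ((i : ℕ) + 1))⁻¹ = finRotate m := mul_inv_cancel_right _ _
        exact key ▸ H.mul_mem hgi (H.inv_mem (H.pow_mem hρH _))
      -- the three cycles
      have hA : (Equiv.swap (⟨0, by omega⟩ : Fin m) ⟨1, by omega⟩ *
          Equiv.swap (⟨1, by omega⟩ : Fin m) ⟨r, by omega⟩) ∈ H := by
        have keyA := eq_mul_inv_of_mul_eq (comm1 hr0 hrm hr3 hrm1).symm
        rw [keyA]
        exact H.mul_mem (H.mul_mem hρH hσH) (H.inv_mem (H.mul_mem hσH hρH))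
      have hB : (Equiv.swap (⟨1, by omega⟩ : Fin m) ⟨2, by omega⟩ *
          Equiv.swap (⟨2, by omega⟩ : Fin m) ⟨r, by omega⟩) ∈ H := by
        have keyB := eq_mul_inv_of_mul_eq (comm2 hr0 hrm hr3 hrm1).symm
        rw [keyB]
        exact H.mul_mem (H.mul_mem hρH hA) (H.inv_mem hρH)
      have hτ : (Equiv.swap (⟨0, by omega⟩ : Fin m) ⟨1, by omega⟩ *
          Equiv.swap (⟨1, by omega⟩ : Fin m) ⟨2, by omega⟩) ∈ H :=
        (AB_eq hrm hr3 hrm1) ▸ H.mul_mem hA hB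
      have hcyc : (finRotate m).IsCycle := isCycle_finRotate_of_le (by omega)
      have hsup : (finRotate m).support = Finset.univ := support_finRotate_of_le (by omega)
      have halt := alt_le_closure_adj3 hcyc hsup (⟨0, by omega⟩ : Fin m)
      have e1 : finRotate m (⟨0, by omega⟩ : Fin m) = ⟨1, by omega⟩ := by
        rw [rot_mk_lt 0 (by omega)]
      have e2 : finRotate m (⟨1, by omega⟩ : Fin m) = ⟨2, by omega⟩ := by
        rw [rot_mk_lt 1 (by omega)]
      rw [e1, e2] at halt
      refine le_trans halt ((Subgroup.closure_le H).mpr ?_)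
      exact Set.insert_subset_iff.mpr ⟨hσH, Set.singleton_subset_iff.mpr hτ⟩
end

section
/- Let p be the smallest prime factor of k, and let S = {X} ∪ {Y X^s : 0 ≤ s ≤ p−1} ⊂ H(k), a set of size p+1. Then every pair of distinct elements of S generates H(k), and p+1 is the maximal size of a subset of H(k) with this pairwise-generation property. -/
/-- The upper unitriangular 3×3 matrix over `ZMod k` with entries `a = M₁₂`, `b = M₂₃`,
`c = M₁₃`. -/
def heis (k : ℕ) (a b c : ZMod k) : Matrix (Fin 3) (Fin 3) (ZMod k) :=
  !![1, a, c; 0, 1, b; 0, 0, 1]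

theorem heis_mul (k : ℕ) (a b c d e f : ZMod k) :
    heis k a b c * heis k d e f = heis k (a + d) (b + e) (c + f + a * e) := by
  ext i j
  fin_cases i <;> fin_cases j <;>
    simp [heis, Matrix.mul_apply, Fin.sum_univ_three, Matrix.vecHead, Matrix.vecTail] <;> ring

theorem heis_zero (k : ℕ) : heis k 0 0 0 = 1 := by
  ext i j
  fin_cases i <;> fin_cases j <;> simp [heis, Matrix.one_apply, Matrix.vecHead, Matrix.vecTail]

/-- The upper unitriangular matrix `heis k a b c` as a unit of the matrix ring. -/
def heisUnit (k : ℕ) (a b c : ZMod k) : (Matrix (Fin 3) (Fin 3) (ZMod k))ˣ where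
  val := heis k a b c
  inv := heis k (-a) (-b) (a * b - c)
  val_inv := by
    rw [heis_mul, show a + -a = (0 : ZMod k) by ring, show b + -b = (0 : ZMod k) by ring,
      show c + (a * b - c) + a * -b = (0 : ZMod k) by ring, heis_zero]
  inv_val := by
    rw [heis_mul, show -a + a = (0 : ZMod k) by ring, show -b + b = (0 : ZMod k) by ring,
      show a * b - c + c + -a * b = (0 : ZMod k) by ring, heis_zero]

/-- The mod `k` Heisenberg group: the group of upper unitriangular 3×3 matrices over
`ZMod k`, as a subgroup of the units of the matrix ring. -/
def Heis (k : ℕ) : Subgroup (Matrix (Fin 3) (Fin 3) (ZMod k))ˣ where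
  carrier := {u | ∃ a b c : ZMod k, u = heisUnit k a b c}
  mul_mem' := by
    rintro _ _ ⟨a, b, c, rfl⟩ ⟨d, e, f, rfl⟩
    exact ⟨a + d, b + e, c + f + a * e, Units.ext (by rw [Units.val_mul]; exact heis_mul ..)⟩
  one_mem' := ⟨0, 0, 0, Units.ext (heis_zero k).symm⟩
  inv_mem' := by
    rintro _ ⟨a, b, c, rfl⟩
    exact ⟨-a, -b, a * b - c, Units.ext rfl⟩

/-- The generator `X = E₁₂(1)` of the Heisenberg group. -/
def HeisX (k : ℕ) : Heis k := ⟨heisUnit k 1 0 0, 1, 0, 0, rfl⟩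

/-- The generator `Y = E₂₃(1)` of the Heisenberg group. -/
def HeisY (k : ℕ) : Heis k := ⟨heisUnit k 0 1 0, 0, 1, 0, rfl⟩

/-- The central element `Z = E₁₃(1)` of the Heisenberg group. -/
def HeisZ (k : ℕ) : Heis k := ⟨heisUnit k 0 0 1, 0, 0, 1, rfl⟩

namespace HeisAux

variable {k : ℕ}

/-- Constructor for elements of `Heis k` from coordinates. -/
def mk (k : ℕ) (a b c : ZMod k) : Heis k := ⟨heisUnit k a b c, a, b, c, rfl⟩

lemma repr (g : Heis k) : ∃ a b c, g = mk k a b c := by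
  obtain ⟨a, b, c, h⟩ := g.2
  exact ⟨a, b, c, Subtype.ext h⟩

lemma mk_congr {a b c d e f : ZMod k} (h1 : a = d) (h2 : b = e) (h3 : c = f) :
    mk k a b c = mk k d e f := by rw [h1, h2, h3]

lemma mk_mul (a b c d e f : ZMod k) :
    mk k a b c * mk k d e f = mk k (a + d) (b + e) (c + f + a * e) :=
  Subtype.ext (Units.ext (heis_mul ..))

lemma mk_one : mk k 0 0 0 = 1 := Subtype.ext (Units.ext (heis_zero k))

lemma mk_inv (a b c : ZMod k) : (mk k a b c)⁻¹ = mk k (-a) (-b) (a * b - c) :=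
  Subtype.ext (Units.ext rfl)

lemma mk_inj {a b c d e f : ZMod k} (h : mk k a b c = mk k d e f) :
    a = d ∧ b = e ∧ c = f := by
  have h' : heis k a b c = heis k d e f := congrArg (fun g : Heis k => g.1.1) h
  refine ⟨?_, ?_, ?_⟩
  · have := congrFun (congrFun h' 0) 1; simpa [heis] using this
  · have := congrFun (congrFun h' 1) 2; simpa [heis] using this
  · have := congrFun (congrFun h' 0) 2; simpa [heis] using this

lemma mk_zero_pow (c : ZMod k) (n : ℕ) : (mk k 0 0 c) ^ n = mk k 0 0 (n * c) := by
  induction n with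
  | zero => simp only [pow_zero, Nat.cast_zero, zero_mul]; exact mk_one.symm
  | succ n ih =>
    rw [pow_succ, ih, mk_mul]
    exact mk_congr (by ring) (by ring) (by push_cast; ring)

lemma pow_coords (a b c : ZMod k) (n : ℕ) :
    ∃ c', (mk k a b c) ^ n = mk k (n * a) (n * b) c' := by
  induction n with
  | zero => exact ⟨0, by simp only [pow_zero, Nat.cast_zero, zero_mul]; exact mk_one.symm⟩
  | succ n ih =>
    obtain ⟨c', hc'⟩ := ih
    refine ⟨c' + c + (n * a) * b, ?_⟩
    rw [pow_succ, hc', mk_mul]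
    exact mk_congr (by push_cast; ring) (by push_cast; ring) rfl

lemma heisX_eq : HeisX k = mk k 1 0 0 := rfl
lemma heisY_eq : HeisY k = mk k 0 1 0 := rfl
lemma heisZ_eq : HeisZ k = mk k 0 0 1 := rfl

lemma xpow (s : ℕ) : (HeisX k) ^ s = mk k (s : ZMod k) 0 0 := by
  induction s with
  | zero => simp only [pow_zero, Nat.cast_zero]; exact mk_one.symm
  | succ n ih =>
    rw [pow_succ, ih, heisX_eq, mk_mul]
    exact mk_congr (by push_cast; ring) (by ring) (by ring)

lemma yxs (s : ℕ) : HeisY k * (HeisX k) ^ s = mk k (s : ZMod k) 1 0 := by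
  rw [xpow, heisY_eq, mk_mul]
  exact mk_congr (by ring) (by ring) (by ring)

lemma central_pow (e : ZMod k) [NeZero k] : mk k 0 0 e = (HeisZ k) ^ e.val := by
  rw [heisZ_eq, mk_zero_pow]
  exact mk_congr rfl rfl (by rw [mul_one, ZMod.natCast_val, ZMod.cast_id])

lemma gen [NeZero k] (a₁ b₁ c₁ a₂ b₂ c₂ : ZMod k)
    (h : IsUnit (a₁ * b₂ - a₂ * b₁)) :
    Subgroup.closure {mk k a₁ b₁ c₁, mk k a₂ b₂ c₂} = ⊤ := by
  obtain ⟨w, hw⟩ := h.exists_right_inv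
  set g₁ := mk k a₁ b₁ c₁ with hg₁def
  set g₂ := mk k a₂ b₂ c₂ with hg₂def
  set H := Subgroup.closure {g₁, g₂} with hH
  have hm₁ : g₁ ∈ H := Subgroup.subset_closure (Set.mem_insert _ _)
  have hm₂ : g₂ ∈ H := Subgroup.subset_closure (Set.mem_insert_of_mem _ rfl)
  have hwval : ((w.val : ℕ) : ZMod k) = w := by rw [ZMod.natCast_val, ZMod.cast_id]
  have hcom : g₁ * g₂ * g₁⁻¹ * g₂⁻¹ = mk k 0 0 (a₁ * b₂ - a₂ * b₁) := by
    rw [hg₁def, hg₂def, mk_inv, mk_inv, mk_mul, mk_mul, mk_mul]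
    exact mk_congr (by ring) (by ring) (by ring)
  have hZ : HeisZ k ∈ H := by
    have h1 : (g₁ * g₂ * g₁⁻¹ * g₂⁻¹) ^ w.val ∈ H :=
      pow_mem (mul_mem (mul_mem (mul_mem hm₁ hm₂) (inv_mem hm₁)) (inv_mem hm₂)) _
    have h2 : (g₁ * g₂ * g₁⁻¹ * g₂⁻¹) ^ w.val = HeisZ k := by
      rw [hcom, mk_zero_pow, heisZ_eq, hwval]
      exact mk_congr rfl rfl (by rw [mul_comm]; exact hw)
    rwa [h2] at h1
  have hcent : ∀ e : ZMod k, mk k 0 0 e ∈ H := fun e => by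
    rw [central_pow]; exact pow_mem hZ _
  rw [eq_top_iff]
  intro g _
  obtain ⟨a, b, c, rfl⟩ := repr g
  set x : ZMod k := w * (a * b₂ - b * a₂) with hxdef
  set y : ZMod k := w * (b * a₁ - a * b₁) with hydef
  obtain ⟨d₁, hd₁⟩ := pow_coords a₁ b₁ c₁ x.val
  obtain ⟨d₂, hd₂⟩ := pow_coords a₂ b₂ c₂ y.val
  have hxval : ((x.val : ℕ) : ZMod k) = x := by rw [ZMod.natCast_val, ZMod.cast_id]
  have hyval : ((y.val : ℕ) : ZMod k) = y := by rw [ZMod.natCast_val, ZMod.cast_id]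
  have hmemp : g₁ ^ x.val * g₂ ^ y.val ∈ H := mul_mem (pow_mem hm₁ _) (pow_mem hm₂ _)
  have key : mk k a b c =
      mk k 0 0 (c - (d₁ + d₂ + (↑x.val * a₁) * (↑y.val * b₂))) * (g₁ ^ x.val * g₂ ^ y.val) := by
    rw [hd₁, hd₂, mk_mul, mk_mul]
    refine mk_congr ?_ ?_ (by ring)
    · rw [hxval, hyval, hxdef, hydef]
      linear_combination -a * hw
    · rw [hxval, hyval, hxdef, hydef]
      linear_combination -b * hw
  rw [key]
  exact mul_mem (hcent _) hmemp

lemma small_unit [NeZero k] {m : ℕ} (h0 : 0 < m) (h1 : m < k.minFac) :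
    IsUnit (m : ZMod k) := by
  rw [ZMod.isUnit_iff_coprime]
  by_contra hcop
  have hd : 2 ≤ Nat.gcd m k := by
    have : Nat.gcd m k ≠ 0 := fun h => by
      have := Nat.eq_zero_of_gcd_eq_zero_left h; omega
    have : Nat.gcd m k ≠ 1 := hcop
    omega
  have h2 : k.minFac ≤ Nat.gcd m k := Nat.minFac_le_of_dvd hd (Nat.gcd_dvd_right m k)
  have h3 : Nat.gcd m k ≤ m := Nat.le_of_dvd h0 (Nat.gcd_dvd_left m k)
  omega

/-- First coordinate (entry (0,1)). -/
def ca (g : Heis k) : ZMod k := g.1.1 0 1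
/-- Second coordinate (entry (1,2)). -/
def cb (g : Heis k) : ZMod k := g.1.1 1 2

@[simp] lemma ca_mk (a b c : ZMod k) : ca (mk k a b c) = a := by
  simp [ca, mk, heisUnit, heis]

@[simp] lemma cb_mk (a b c : ZMod k) : cb (mk k a b c) = b := by
  simp [cb, mk, heisUnit, heis]

lemma kill {p : ℕ} (r : ZMod k →+* ZMod p) (u v : ZMod p) (g₁ g₂ : Heis k)
    (hcl : Subgroup.closure {g₁, g₂} = ⊤)
    (h₁ : u * r (ca g₁) + v * r (cb g₁) = 0)
    (h₂ : u * r (ca g₂) + v * r (cb g₂) = 0)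
    (g : Heis k) : u * r (ca g) + v * r (cb g) = 0 := by
  let φ : Heis k →* Multiplicative (ZMod p) :=
  { toFun := fun g => Multiplicative.ofAdd (u * r (ca g) + v * r (cb g))
    map_one' := by
      rw [show (1 : Heis k) = mk k 0 0 0 from mk_one.symm]
      simp
    map_mul' := by
      intro g h
      obtain ⟨a, b, c, rfl⟩ := repr g
      obtain ⟨d, e, f', rfl⟩ := repr h
      rw [mk_mul]
      simp only [ca_mk, cb_mk, map_add]
      rw [← ofAdd_add]
      congr 1
      ring }
  have hsub : Subgroup.closure {g₁, g₂} ≤ φ.ker := by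
    rw [Subgroup.closure_le]
    rintro x hx
    rcases Set.mem_insert_iff.1 hx with rfl | hx
    · refine MonoidHom.mem_ker.2 ?_
      show Multiplicative.ofAdd (u * r (ca x) + v * r (cb x)) = 1
      rw [h₁]; rfl
    · rw [Set.mem_singleton_iff] at hx
      subst hx
      refine MonoidHom.mem_ker.2 ?_
      show Multiplicative.ofAdd (u * r (ca x) + v * r (cb x)) = 1
      rw [h₂]; rfl
  rw [hcl] at hsub
  have hg : φ g = 1 := MonoidHom.mem_ker.1 (hsub (Subgroup.mem_top g))
  have hg' : Multiplicative.ofAdd (u * r (ca g) + v * r (cb g)) = 1 := hg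
  exact ofAdd_eq_one.mp hg'

end HeisAux

/-- Let `p` be the smallest prime factor of `k ≥ 2` and
`S = {X} ∪ {Y X^s : 0 ≤ s ≤ p−1} ⊆ H(k)`, a set of size `p + 1`.  Every pair of distinct
elements of `S` generates `H(k)`, and `p + 1` is the maximal size of a subset of `H(k)`
with this pairwise-generation property. -/
theorem heis_pairwise_generating_set (k : ℕ) (hk : 2 ≤ k) (p : ℕ) (hp : p = k.minFac)
    (S : Set (Heis k))
    (hS : S = insert (HeisX k) {g : Heis k | ∃ s : ℕ, s < p ∧ g = HeisY k * (HeisX k) ^ s}) :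
    S.ncard = p + 1 ∧
    (∀ g₁ ∈ S, ∀ g₂ ∈ S, g₁ ≠ g₂ → Subgroup.closure {g₁, g₂} = ⊤) ∧
    (∀ T : Set (Heis k),
      (∀ g₁ ∈ T, ∀ g₂ ∈ T, g₁ ≠ g₂ → Subgroup.closure {g₁, g₂} = ⊤) →
      T.ncard ≤ p + 1) := by
  classical
  haveI : NeZero k := ⟨by omega⟩
  haveI : Fact (1 < k) := ⟨by omega⟩
  have hpp : p.Prime := hp ▸ Nat.minFac_prime (by omega)
  haveI : Fact p.Prime := ⟨hpp⟩
  haveI : Fact (1 < p) := ⟨hpp.one_lt⟩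
  haveI : NeZero p := ⟨hpp.pos.ne'⟩
  have hpk : p ∣ k := hp ▸ Nat.minFac_dvd k
  have hple : p ≤ k := hp ▸ Nat.minFac_le (by omega)
  refine ⟨?_, ?_, ?_⟩
  · -- cardinality
    have himg : {g : Heis k | ∃ s : ℕ, s < p ∧ g = HeisY k * (HeisX k) ^ s}
        = (fun s : ℕ => HeisY k * (HeisX k) ^ s) '' Set.Iio p := by
      ext g
      constructor
      · rintro ⟨s, hs, rfl⟩; exact ⟨s, hs, rfl⟩
      · rintro ⟨s, hs, rfl⟩; exact ⟨s, hs, rfl⟩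
    have hinj : Set.InjOn (fun s : ℕ => HeisY k * (HeisX k) ^ s) (Set.Iio p) := by
      intro s hs t ht h
      simp only [HeisAux.yxs] at h
      obtain ⟨h1, -, -⟩ := HeisAux.mk_inj h
      have hs' := ZMod.val_cast_of_lt (lt_of_lt_of_le hs hple)
      have ht' := ZMod.val_cast_of_lt (lt_of_lt_of_le ht hple)
      rw [← hs', ← ht', h1]
    have hXnot : HeisX k ∉ (fun s : ℕ => HeisY k * (HeisX k) ^ s) '' Set.Iio p := by
      rintro ⟨s, hs, h⟩
      simp only at h
      rw [HeisAux.yxs, HeisAux.heisX_eq] at h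
      obtain ⟨-, h2, -⟩ := HeisAux.mk_inj h
      exact one_ne_zero h2
    have hIio : (Set.Iio p).ncard = p := by
      rw [← Finset.coe_range, Set.ncard_coe_finset, Finset.card_range]
    rw [hS, himg, Set.ncard_insert_of_notMem hXnot ((Set.finite_Iio p).image _),
      Set.ncard_image_of_injOn hinj, hIio]
  · -- pairwise generation
    intro g₁ hg₁ g₂ hg₂ hne
    rw [hS] at hg₁ hg₂
    rcases Set.mem_insert_iff.1 hg₁ with h₁ | ⟨s, hs, h₁⟩ <;>
      rcases Set.mem_insert_iff.1 hg₂ with h₂ | ⟨t, ht, h₂⟩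
    · exact absurd (h₁.trans h₂.symm) hne
    · rw [h₁, h₂, HeisAux.yxs, HeisAux.heisX_eq]
      exact HeisAux.gen _ _ _ _ _ _ (by simp)
    · rw [h₁, h₂, HeisAux.yxs, HeisAux.heisX_eq]
      exact HeisAux.gen _ _ _ _ _ _ (by simp only [one_mul, mul_zero, mul_one, zero_sub]; exact isUnit_one.neg)
    · have hst : s ≠ t := by
        rintro rfl
        exact hne (h₁.trans h₂.symm)
      rw [h₁, h₂, HeisAux.yxs, HeisAux.yxs]
      refine HeisAux.gen _ _ _ _ _ _ ?_
      simp only [mul_one, mul_zero, one_mul]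
      rcases Nat.lt_or_ge t s with hlt | hge
      · have hu := HeisAux.small_unit (k := k) (m := s - t) (by omega)
          (by rw [← hp]; omega)
        rwa [Nat.cast_sub hlt.le] at hu
      · have hlt : s < t := by omega
        have hu := (HeisAux.small_unit (k := k) (m := t - s) (by omega)
          (by rw [← hp]; omega)).neg
        rwa [Nat.cast_sub hlt.le, neg_sub] at hu
  · -- maximality
    intro T hT
    set r : ZMod k →+* ZMod p := ZMod.castHom hpk (ZMod p) with hr
    set f : Heis k → Option (ZMod p) := fun g =>
      if r (HeisAux.cb g) = 0 then none else some (r (HeisAux.ca g) * (r (HeisAux.cb g))⁻¹)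
      with hf
    have hinj : Set.InjOn f T := by
      intro g hg h hh hfe
      by_contra hne
      have hcl := hT g hg h hh hne
      by_cases hgb : r (HeisAux.cb g) = 0 <;> by_cases hhb : r (HeisAux.cb h) = 0
      · have hkill := HeisAux.kill r 0 1 g h hcl (by rw [hgb]; ring) (by rw [hhb]; ring)
          (HeisY k)
        rw [HeisAux.heisY_eq] at hkill
        simp at hkill
      · simp only [hf, if_pos hgb, if_neg hhb] at hfe
        cases hfe
      · simp only [hf, if_neg hgb, if_pos hhb] at hfe
        cases hfe
      · simp only [hf, if_neg hgb, if_neg hhb, Option.some.injEq] at hfe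
        set ρ := r (HeisAux.ca h) * (r (HeisAux.cb h))⁻¹ with hρ
        have hg1 : (1 : ZMod p) * r (HeisAux.ca g) + (-ρ) * r (HeisAux.cb g) = 0 := by
          rw [← hfe]
          field_simp
          ring
        have hh1 : (1 : ZMod p) * r (HeisAux.ca h) + (-ρ) * r (HeisAux.cb h) = 0 := by
          rw [hρ]
          field_simp
          ring
        have hkill := HeisAux.kill r 1 (-ρ) g h hcl hg1 hh1 (HeisX k)
        rw [HeisAux.heisX_eq] at hkill
        simp at hkill
    have hcard := Set.ncard_le_ncard_of_injOn f (fun a _ => Set.mem_univ (f a)) hinj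
      Set.finite_univ
    rwa [Set.ncard_univ, Nat.card_eq_fintype_card, Fintype.card_option, ZMod.card] at hcard
end

section
/- Let k ≥ 2, let m divide k with 1 < m < k and gcd(m, k/m) = 1, let ℓ = k/m, and let ζ be a primitive k-th root of unity. Define r : H(k) → GL_m(Q(ζ)) by r(X) = diag(ζ, ζ^{ℓ+1}, …, ζ^{(m−1)ℓ+1}), r(Y) the cyclic shift matrix with top-right entry ζ^m and subdiagonal entries 1, and r(Z) = ζ^ℓ I. Then r is a well-defined group homomorphism, i.e. these matrices satisfy the relations X^k = Y^k = Z^k = 1, XZ = ZX, YZ = ZY, and XYX⁻¹Y⁻¹ = Z. -/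
lemma shift_pow_aux (m : ℕ) (hm : 0 < m) (K : Type*) [Field K] (ζ : K)
    (t : ℕ) (ht : t ≤ m) (i j : Fin m) :
    ((Matrix.of fun i j : Fin m =>
        if i.val = j.val + 1 then 1 else if i.val = 0 ∧ j.val = m - 1 then ζ ^ m else 0) ^ t) i j
      = if i.val = j.val + t then 1 else if i.val + m = j.val + t then ζ ^ m else 0 := by
  induction t generalizing i j with
  | zero =>
    have hj : j.val < m := j.isLt
    simp only [pow_zero, Matrix.one_apply, add_zero]
    rcases eq_or_ne i j with h | h
    · simp [h]
    · rw [if_neg h, if_neg (fun hc => h (Fin.ext hc)), if_neg (by omega)]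
  | succ t ih =>
    have ht' : t ≤ m := Nat.le_of_succ_le ht
    have hj : j.val < m := j.isLt
    have hi' : i.val < m := i.isLt
    rw [pow_succ', Matrix.mul_apply]
    rcases Nat.eq_zero_or_pos i.val with hi | hi
    · rw [Finset.sum_eq_single (⟨m - 1, by omega⟩ : Fin m)]
      · have hv : ((⟨m - 1, by omega⟩ : Fin m) : ℕ) = m - 1 := rfl
        simp only [Matrix.of_apply]
        rw [if_neg (by omega), if_pos ⟨hi, trivial⟩, ih ht']
        simp only [hv]
        split_ifs <;> first | ring1 | (exfalso; omega)
      · intro b _ hb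
        have hb' : b.val ≠ m - 1 := fun h => hb (Fin.ext (by simpa using h))
        simp only [Matrix.of_apply]
        rw [if_neg (by omega), if_neg (fun h => hb' h.2), zero_mul]
      · intro h; exact absurd (Finset.mem_univ _) h
    · rw [Finset.sum_eq_single (⟨i.val - 1, by omega⟩ : Fin m)]
      · have hv : ((⟨i.val - 1, by omega⟩ : Fin m) : ℕ) = i.val - 1 := rfl
        simp only [Matrix.of_apply]
        rw [if_pos (by omega), one_mul, ih ht']
        simp only [hv]
        split_ifs <;> first | rfl | (exfalso; omega)
      · intro b _ hb
        have hb' : b.val ≠ i.val - 1 := fun h => hb (Fin.ext (by simpa using h))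
        simp only [Matrix.of_apply]
        rw [if_neg (by omega), if_neg (by omega), zero_mul]
      · intro h; exact absurd (Finset.mem_univ _) h

/-- Let `m ∣ k` with `1 < m < k` and `gcd(m, k/m) = 1`, let `ℓ = k/m`, and let `ζ` be a
primitive `k`-th root of unity.  The matrices
`r(X) = diag(ζ, ζ^{ℓ+1}, …, ζ^{(m−1)ℓ+1})`, `r(Y)` the cyclic shift matrix with
top-right entry `ζ^m` and subdiagonal entries `1`, and `r(Z) = ζ^ℓ I` satisfy the
defining relations of the mod `k` Heisenberg group:
`X^k = Y^k = Z^k = 1`, `XZ = ZX`, `YZ = ZY`, and `XY = Z·YX` (i.e. `XYX⁻¹Y⁻¹ = Z`);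
hence `r` defines a group homomorphism `H(k) → GL_m(ℚ(ζ))`. -/
theorem heisenberg_rep_well_defined (k m : ℕ) (hm : 1 < m) (hmk : m < k) (hdvd : m ∣ k)
    (hcop : Nat.Coprime m (k / m)) (K : Type*) [Field K] (ζ : K)
    (hζ : IsPrimitiveRoot ζ k) :
    letI ℓ : ℕ := k / m
    letI rX : Matrix (Fin m) (Fin m) K :=
      Matrix.diagonal fun i : Fin m => ζ ^ (i.val * ℓ + 1)
    letI rY : Matrix (Fin m) (Fin m) K :=
      Matrix.of fun i j : Fin m =>
        if i.val = j.val + 1 then 1 else if i.val = 0 ∧ j.val = m - 1 then ζ ^ m else 0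
    letI rZ : Matrix (Fin m) (Fin m) K := ζ ^ ℓ • (1 : Matrix (Fin m) (Fin m) K)
    rX ^ k = 1 ∧ rY ^ k = 1 ∧ rZ ^ k = 1 ∧
      rX * rZ = rZ * rX ∧ rY * rZ = rZ * rY ∧ rX * rY = rZ * (rY * rX) := by
  have hm0 : 0 < m := by omega
  have hk : ζ ^ k = 1 := hζ.pow_eq_one
  have hml : m * (k / m) = k := Nat.mul_div_cancel' hdvd
  have hYm : ((Matrix.of fun i j : Fin m =>
      if i.val = j.val + 1 then 1 else if i.val = 0 ∧ j.val = m - 1 then ζ ^ m else 0) ^ m)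
      = (ζ ^ m) • (1 : Matrix (Fin m) (Fin m) K) := by
    ext i j
    have hj : j.val < m := j.isLt
    have hi : i.val < m := i.isLt
    rw [shift_pow_aux m hm0 K ζ m le_rfl i j]
    simp only [Matrix.smul_apply, Matrix.one_apply, smul_eq_mul]
    rcases eq_or_ne i j with h | h
    · rw [if_neg (by omega), if_pos (by omega), if_pos h, mul_one]
    · have h' : i.val ≠ j.val := fun hc => h (Fin.ext hc)
      rw [if_neg (by omega), if_neg (by omega), if_neg h, mul_zero]
  refine ⟨?_, ?_, ?_, ?_, ?_, ?_⟩
  · rw [Matrix.diagonal_pow]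
    have hone : ((fun i : Fin m => ζ ^ (i.val * (k / m) + 1)) ^ k) = (1 : Fin m → K) := by
      funext i
      rw [Pi.pow_apply, Pi.one_apply, ← pow_mul, mul_comm, pow_mul, hk, one_pow]
    rw [hone]
    exact Matrix.diagonal_one
  · rw [← hml, pow_mul, hYm, smul_pow, one_pow, ← pow_mul, hml, hk, one_smul]
  · rw [smul_pow, one_pow, ← pow_mul, mul_comm, pow_mul, hk, one_pow, one_smul]
  · rw [Matrix.mul_smul, Matrix.smul_mul, mul_one, one_mul]
  · rw [Matrix.mul_smul, Matrix.smul_mul, mul_one, one_mul]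
  · ext i j
    rw [Matrix.diagonal_mul, Matrix.smul_mul, one_mul, Matrix.smul_apply, Matrix.mul_diagonal,
      smul_eq_mul]
    simp only [Matrix.of_apply]
    split_ifs with h1 h2
    · rw [h1, mul_one, one_mul, ← pow_add]
      congr 1
      ring
    · have h2' : (m - 1) * (k / m) + (k / m) = k := by
        have he : (m - 1) * (k / m) + (k / m) = ((m - 1) + 1) * (k / m) := by ring
        rw [he, Nat.sub_add_cancel (by omega)]
        exact hml
      have e : k / m + ((m - 1) * (k / m) + 1) = k + 1 := by omega
      rw [h2.1, h2.2, mul_left_comm, ← pow_add, ← pow_add, e, pow_succ, hk, one_mul,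
        show 0 * (k / m) + 1 + m = m + 1 by omega, pow_succ]
    · ring
end

section
/- With notation as in the Heisenberg representation r : H(k) → GL_m(Q(ζ)) (k, m, ℓ = k/m coprime to m, ζ a primitive k-th root of unity, p the smallest prime factor of k), for every g in the set S = {X} ∪ {YX^s : 0 ≤ s ≤ p−2}, the matrix r(g) − I is invertible. -/
/-- With the Heisenberg representation `r : H(k) → GL_m(ℚ(ζ))` (where `m ∣ k`,
`1 < m < k`, `gcd(m, k/m) = 1`, `ℓ = k/m`, `ζ` a primitive `k`-th root of unity, and `p`
the smallest prime factor of `k`): for every `g` in the set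
`S = {X} ∪ {Y X^s : 0 ≤ s ≤ p−2}`, the matrix `r(g) − I` is invertible. -/
theorem heisenberg_rep_no_fixed_vector (k m : ℕ) (hm : 1 < m) (hmk : m < k) (hdvd : m ∣ k)
    (hcop : Nat.Coprime m (k / m)) (K : Type*) [Field K] (ζ : K)
    (hζ : IsPrimitiveRoot ζ k) (p : ℕ) (hp : p = k.minFac) :
    letI ℓ : ℕ := k / m
    letI rX : Matrix (Fin m) (Fin m) K :=
      Matrix.diagonal fun i : Fin m => ζ ^ (i.val * ℓ + 1)
    letI rY : Matrix (Fin m) (Fin m) K :=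
      Matrix.of fun i j : Fin m =>
        if i.val = j.val + 1 then 1 else if i.val = 0 ∧ j.val = m - 1 then ζ ^ m else 0
    IsUnit (rX - 1) ∧ ∀ s : ℕ, s ≤ p - 2 → IsUnit (rY * rX ^ s - 1) := by
  set ℓ : ℕ := k / m with hℓdef
  set rX : Matrix (Fin m) (Fin m) K :=
    Matrix.diagonal fun i : Fin m => ζ ^ (i.val * ℓ + 1) with hrXdef
  set rY : Matrix (Fin m) (Fin m) K :=
    Matrix.of fun i j : Fin m =>
      if i.val = j.val + 1 then 1 else if i.val = 0 ∧ j.val = m - 1 then ζ ^ m else 0 with hrYdef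
  have hk1 : 1 < k := lt_trans hm hmk
  have hℓdvd : ℓ ∣ k := Nat.div_dvd_of_dvd hdvd
  have hℓ2 : 2 ≤ ℓ := by
    obtain ⟨c, rfl⟩ := hdvd
    have hc : ℓ = c := Nat.mul_div_cancel_left c (by omega)
    have : 1 < c := by
      by_contra h
      interval_cases c <;> omega
    omega
  have hℓ1 : ℓ ≠ 1 := by omega
  have hℓpos : 0 < ℓ := by omega
  have hzpow : ∀ n : ℕ, ¬ ℓ ∣ n → ζ ^ n ≠ 1 := by
    intro n hn h1
    exact hn (dvd_trans hℓdvd ((hζ.pow_eq_one_iff_dvd n).mp h1))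
  constructor
  · have hd : rX - 1 = Matrix.diagonal (fun i : Fin m => ζ ^ (i.val * ℓ + 1) - 1) := by
      rw [show (1 : Matrix (Fin m) (Fin m) K) = Matrix.diagonal (fun _ => 1) from
        Matrix.diagonal_one.symm, Matrix.diagonal_sub]
    rw [hd, Matrix.isUnit_iff_isUnit_det, Matrix.det_diagonal, isUnit_iff_ne_zero]
    apply Finset.prod_ne_zero_iff.mpr
    intro i _
    rw [sub_ne_zero]
    apply hzpow
    intro hdd
    have h1 : ℓ ∣ i.val * ℓ := Dvd.intro_left _ rfl
    have h2 : ℓ ∣ 1 := (Nat.dvd_add_right h1).mp hdd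
    have h3 := Nat.le_of_dvd one_pos h2
    omega
  · intro s hs
    have hp2 : 2 ≤ p := hp ▸ (Nat.minFac_prime (by omega)).two_le
    have hpℓ : p ≤ ℓ := by
      have h1 : ℓ.minFac ∣ k := dvd_trans (Nat.minFac_dvd ℓ) hℓdvd
      have h2 : 2 ≤ ℓ.minFac := (Nat.minFac_prime hℓ1).two_le
      have h3 : k.minFac ≤ ℓ.minFac := Nat.minFac_le_of_dvd h2 h1
      have h4 : ℓ.minFac ≤ ℓ := Nat.minFac_le hℓpos
      omega
    set A : ℕ := ∑ j ∈ Finset.range m, j with hA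
    set t : ℕ := m + ∑ j ∈ Finset.range m, (j * ℓ + 1) * s with ht
    have hsum : ∑ j ∈ Finset.range m, (j * ℓ + 1) * s = (A * ℓ + m) * s := by
      rw [← Finset.sum_mul]
      congr 1
      rw [Finset.sum_add_distrib, ← Finset.sum_mul, Finset.sum_const, Finset.card_range,
        smul_eq_mul, mul_one]
    have hteq : t = m * (s + 1) + ℓ * (A * s) := by rw [ht, hsum]; ring
    have hζt : ζ ^ t ≠ 1 := by
      apply hzpow
      intro hdd
      rw [hteq] at hdd
      have h3 : ℓ ∣ m * (s + 1) := (Nat.dvd_add_right ⟨A * s, rfl⟩).mp (by rwa [add_comm] at hdd)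
      have h4 : ℓ ∣ s + 1 := (Nat.Coprime.symm hcop).dvd_of_dvd_mul_left h3
      have h5 : ℓ ≤ s + 1 := Nat.le_of_dvd (by omega) h4
      omega
    rw [Matrix.isUnit_iff_isUnit_det, isUnit_iff_ne_zero]
    intro hdet
    obtain ⟨v, hv0, hv⟩ := Matrix.exists_mulVec_eq_zero_iff.mpr hdet
    set e : Fin m → K := fun j => ζ ^ ((j.val * ℓ + 1) * s) with he
    have hrY : ∀ i j : Fin m, rY i j =
        if i.val = j.val + 1 then (1 : K) else
          if i.val = 0 ∧ j.val = m - 1 then ζ ^ m else 0 := fun i j => by rw [hrYdef]; rfl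
    have hX : rX ^ s = Matrix.diagonal e := by
      rw [hrXdef, Matrix.diagonal_pow]
      have : ((fun i : Fin m => ζ ^ (i.val * ℓ + 1)) ^ s) = e :=
        funext fun j => by simp [he, Pi.pow_apply, ← pow_mul]
      rw [this]
    have heq : ∀ i : Fin m, (∑ j : Fin m, (rY i j) * (e j * v j)) = v i := by
      intro i
      have h1 := congrFun hv i
      rw [Matrix.sub_mulVec, Matrix.one_mulVec, Pi.sub_apply, Pi.zero_apply, sub_eq_zero] at h1
      rw [← h1, hX, Matrix.mulVec, dotProduct]
      exact Finset.sum_congr rfl fun j _ => by rw [Matrix.mul_diagonal, mul_assoc]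
    have hstep : ∀ n (hn1 : n + 1 < m),
        e ⟨n, by omega⟩ * v ⟨n, by omega⟩ = v ⟨n + 1, hn1⟩ := by
      intro n hn1
      rw [← heq ⟨n + 1, hn1⟩]
      rw [Finset.sum_eq_single (⟨n, by omega⟩ : Fin m)]
      · rw [hrY]
        simp
      · intro b _ hb
        have hb' : b.val ≠ n := fun h => hb (Fin.ext h)
        rw [hrY]
        simp only [Fin.val_mk]
        rw [if_neg (by omega), if_neg (by omega), zero_mul]
      · simp
    have hchain : ∀ n (hn : n < m),
        v ⟨n, hn⟩ = (∏ j ∈ Finset.range n, ζ ^ ((j * ℓ + 1) * s)) * v ⟨0, by omega⟩ := by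
      intro n
      induction n with
      | zero => intro hn; simp
      | succ n ih =>
        intro hn
        rw [← hstep n hn, ih (by omega), Finset.prod_range_succ]
        simp only [he, Fin.val_mk]
        ring
    -- the wrap-around equation at i = 0
    have hwrap : ζ ^ m * (e ⟨m - 1, by omega⟩ * v ⟨m - 1, by omega⟩) = v ⟨0, by omega⟩ := by
      rw [← heq ⟨0, by omega⟩]
      rw [Finset.sum_eq_single (⟨m - 1, by omega⟩ : Fin m)]
      · rw [hrY]
        simp
      · intro b _ hb
        have hb' : b.val ≠ m - 1 := fun h => hb (Fin.ext h)
        rw [hrY]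
        simp only [Fin.val_mk]
        rw [if_neg (by omega), if_neg (by omega), zero_mul]
      · simp
    have hprod : ζ ^ m * ((∏ j ∈ Finset.range (m - 1), ζ ^ ((j * ℓ + 1) * s)) *
        ζ ^ (((m - 1 : ℕ) * ℓ + 1) * s)) = ζ ^ t := by
      rw [← Finset.prod_range_succ (fun j => ζ ^ ((j * ℓ + 1) * s)) (m - 1),
        show m - 1 + 1 = m from by omega,
        Finset.prod_pow_eq_pow_sum, ← pow_add, ht]
    have hv00 : ζ ^ t * v ⟨0, by omega⟩ = v ⟨0, by omega⟩ := by
      conv_rhs => rw [← hwrap, hchain (m - 1) (by omega)]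
      simp only [he, Fin.val_mk]
      rw [← hprod]
      ring
    have hv0z : v ⟨0, by omega⟩ = 0 := by
      have h6 : (ζ ^ t - 1) * v ⟨0, by omega⟩ = 0 := by
        rw [sub_mul, one_mul, hv00, sub_self]
      rcases mul_eq_zero.mp h6 with h' | h'
      · exact absurd (by rwa [sub_eq_zero] at h') hζt
      · exact h'
    apply hv0
    funext i
    have := hchain i.val i.isLt
    rw [Fin.eta] at this
    rw [this, hv0z, mul_zero]
    rfl
end

section
/- Let Γ be a graph in which no vertex subset W satisfies simultaneously: (1) W is independent, (2) there exist two distinct vertices of W both dominating a third vertex of W, (4) every vertex of W divides W trivially, (5) W is closed under domination lower bounds. Then for every domination chain v₁ ≥ v₂ ≥ v₃ of length 3 in Γ, the set U(v₁) of vertices dominating v₁ is a clique, and v₁ dominates some vertex adjacent to it. -/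
/-- The star of a vertex `v`: its neighbors together with `v` itself. -/
def SimpleGraph.star {V : Type*} (G : SimpleGraph V) (v : V) : Set V :=
  {u : V | G.Adj v u ∨ u = v}

/-- `v` divides the set `W` trivially: `W − L(v)` lies in a single connected component of
`Γ − st(v)` (the subgraph induced on the complement of the star of `v`). -/
def SimpleGraph.DividesTrivially {V : Type*} (G : SimpleGraph V) (v : V) (W : Set V) :
    Prop :=
  ∃ C : (SimpleGraph.induce (G.star v)ᶜ G).ConnectedComponent,
    ∀ w ∈ W, ¬ G.Dominates v w →
      ∃ hw : w ∈ (G.star v)ᶜ,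
        (SimpleGraph.induce (G.star v)ᶜ G).connectedComponentMk ⟨w, hw⟩ = C

/-- Suppose no vertex subset `W` of `Γ` simultaneously satisfies: (1) `W` is independent,
(2) two distinct vertices of `W` both dominate a third vertex of `W`, (4) every vertex of
`W` divides `W` trivially, and (5) `W` is closed under domination lower bounds.  Then for
every domination chain `v₁ ≥ v₂ ≥ v₃` of length 3, the set `U(v₁)` of vertices dominating
`v₁` is a clique, and `v₁` dominates some vertex adjacent to it. -/
theorem exceptional_graphs (V : Type*) [Fintype V] (G : SimpleGraph V)
    (h : ¬ ∃ W : Set V,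
      (W.Pairwise fun a b => ¬ G.Adj a b) ∧
      (∃ a ∈ W, ∃ b ∈ W, ∃ c ∈ W, a ≠ b ∧ a ≠ c ∧ b ≠ c ∧
        G.Dominates a c ∧ G.Dominates b c) ∧
      (∀ v ∈ W, G.DividesTrivially v W) ∧
      (∀ a b : V, b ∈ W → G.Dominates b a → a ∈ W))
    (v₁ v₂ v₃ : V) (h12 : v₁ ≠ v₂) (h13 : v₁ ≠ v₃) (h23 : v₂ ≠ v₃)
    (d12 : G.Dominates v₁ v₂) (d23 : G.Dominates v₂ v₃) :
    G.IsClique {u : V | G.Dominates u v₁} ∧ ∃ u : V, G.Dominates v₁ u ∧ G.Adj v₁ u := by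
  classical
  have dom_refl : ∀ x : V, G.Dominates x x := fun x u hu => Or.inl hu
  have dom_trans : ∀ x y z : V, x ≠ z → G.Dominates x y → G.Dominates y z →
      G.Dominates x z := by
    intro x y z hxz h1 h2 u hu
    rcases h2 u hu with h | rfl
    · exact h1 u h
    · -- here u = y, and hu : G.Adj y z
      have hzx : G.Adj z x := by
        rcases h1 z hu.symm with h | h
        · exact h
        · exact absurd h (Ne.symm hxz)
      rcases h2 x hzx.symm with h | h
      · exact Or.inl h.symm
      · exact Or.inr h.symm
  have d13 : G.Dominates v₁ v₃ := dom_trans v₁ v₂ v₃ h13 d12 d23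
  -- Part 2: v₁ dominates a neighbor
  have key : ∃ u : V, G.Dominates v₁ u ∧ G.Adj v₁ u := by
    by_contra hB
    push_neg at hB
    apply h
    refine ⟨{x | G.Dominates v₁ x}, ?_, ?_, ?_, ?_⟩
    · -- independence
      intro x hx y hy hxy hadj
      rcases hy x hadj with h' | rfl
      · exact hB x hx h'.symm
      · exact hB y hy hadj
    · exact ⟨v₁, dom_refl v₁, v₂, d12, v₃, d13, h12, h13, h23, d13, d23⟩
    · -- every vertex of W divides W trivially
      intro v hv
      have hv' : G.Dominates v₁ v := hv
      by_cases hvv : v = v₁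
      · subst hvv
        have hv₂ : v₂ ∈ (G.star v)ᶜ := by
          intro hmem
          rcases hmem with h' | h'
          · exact hB v₂ d12 h'
          · exact h12 h'.symm
        exact ⟨(SimpleGraph.induce (G.star v)ᶜ G).connectedComponentMk ⟨v₂, hv₂⟩,
          fun w hw hnd => absurd hw hnd⟩
      · have hv1mem : v₁ ∈ (G.star v)ᶜ := by
          intro hmem
          rcases hmem with h' | h'
          · exact hB v hv' h'.symm
          · exact hvv h'.symm
        refine ⟨(SimpleGraph.induce (G.star v)ᶜ G).connectedComponentMk ⟨v₁, hv1mem⟩,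
          ?_⟩
        intro w hw hnd
        have hw' : G.Dominates v₁ w := hw
        have hwv : w ≠ v := by rintro rfl; exact hnd (dom_refl w)
        have hwmem : w ∈ (G.star v)ᶜ := by
          intro hmem
          rcases hmem with h' | h'
          · rcases hw' v h' with h'' | h''
            · exact hB v hv' h''.symm
            · exact hvv h''
          · exact hwv h'
        obtain ⟨u, huw, hu'⟩ : ∃ u : V, G.Adj u w ∧ ¬ (G.Adj u v ∨ u = v) := by
          by_contra hc
          push_neg at hc
          exact hnd fun u hu => hc u hu
        push_neg at hu'
        have humem : u ∈ (G.star v)ᶜ := by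
          intro hmem
          rcases hmem with h' | h'
          · exact hu'.1 h'.symm
          · exact hu'.2 h'
        have huv₁ : G.Adj u v₁ := by
          rcases hw' u huw with h' | rfl
          · exact h'
          · exact absurd huw (hB w hw')
        refine ⟨hwmem, ?_⟩
        apply SimpleGraph.ConnectedComponent.sound
        have a1 : (SimpleGraph.induce (G.star v)ᶜ G).Adj ⟨w, hwmem⟩ ⟨u, humem⟩ :=
          huw.symm
        have a2 : (SimpleGraph.induce (G.star v)ᶜ G).Adj ⟨u, humem⟩ ⟨v₁, hv1mem⟩ :=
          huv₁
        exact a1.reachable.trans a2.reachable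
    · -- closed under lower bounds
      intro a b hb hdom
      by_cases hab : a = v₁
      · subst hab; exact dom_refl _
      · exact dom_trans v₁ b a (Ne.symm hab) hb hdom
  obtain ⟨u₀, hd, hadj⟩ := key
  refine ⟨?_, u₀, hd, hadj⟩
  rw [SimpleGraph.isClique_iff]
  intro a ha b hb hab
  have ha' : G.Dominates a v₁ := ha
  have hb' : G.Dominates b v₁ := hb
  rcases ha' u₀ hadj.symm with h1 | h1
  · rcases hb' u₀ hadj.symm with h2 | h2
    · -- u₀ adjacent to both a and b
      rcases hd a h1.symm with h3 | h3
      · rcases hb' a h3 with h4 | h4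
        · exact h4
        · exact absurd h4 hab
      · subst h3
        rcases hd b h2.symm with h5 | h5
        · exact h5.symm
        · exact absurd h5.symm hab
    · -- u₀ = b
      subst h2
      rcases ha' u₀ hadj.symm with h4 | h4
      · exact h4.symm
      · exact absurd h4.symm hab
  · -- u₀ = a
    subst h1
    rcases hb' u₀ hadj.symm with h2 | h2
    · exact h2
    · exact absurd h2 hab
end
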